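/- arXiv:1912.09911 — 2 statements merged into one kernel-verified Lean document; each statement's English description precedes it below -/
import Mathlib

section
/- Let J ⊆ {1,…,n}, y ∈ W, and {n_β : β ∈ Φ⁺ ∖ Φ_J⁺} a collection of integers. If the (J,y)-sector S_{J,y}({n_β}) contains more than one alcove (equivalently, is not a single alcove), then it contains an infinite combinatorial gallery that is minimal and regular with respect to S_{J,y}({n_β}). -/
open scoped RealInnerProductSpace
open scoped Classical

noncomputable section

/-- The ambient Euclidean space `V = ℝⁿ`. -/
abbrev V (n : ℕ) : Type := EuclideanSpace ℝ (Fin n)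

/-- The data of an irreducible crystallographic (reduced) root system in `ℝⁿ`,
together with a choice of positive roots, simple roots and highest root. -/
structure RootData (n : ℕ) where
  Φ : Set (V n)
  pos : Set (V n)
  simple : Fin n → V n
  highest : V n
  finite : Φ.Finite
  nonzero : ∀ α ∈ Φ, α ≠ 0
  neg_mem : ∀ α ∈ Φ, -α ∈ Φ
  span_top : Submodule.span ℝ Φ = ⊤
  reflect_mem : ∀ α ∈ Φ, ∀ β ∈ Φ, β - (2 * ⟪α, β⟫ / ⟪α, α⟫) • α ∈ Φ
  crystallographic : ∀ α ∈ Φ, ∀ β ∈ Φ, ∃ m : ℤ, 2 * ⟪α, β⟫ / ⟪α, α⟫ = (m : ℝ)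
  reduced : ∀ α ∈ Φ, ∀ c : ℝ, c • α ∈ Φ → c = 1 ∨ c = -1
  pos_sub : pos ⊆ Φ
  pos_total : ∀ α ∈ Φ, α ∈ pos ∨ -α ∈ pos
  pos_not_neg : ∀ α ∈ pos, -α ∉ pos
  simple_mem : ∀ i, simple i ∈ pos
  simple_indep : LinearIndependent ℝ simple
  pos_combo : ∀ α ∈ pos, ∃ c : Fin n → ℝ, (∀ i, 0 ≤ c i) ∧ α = ∑ i, c i • simple i
  highest_mem : highest ∈ pos
  highest_dominates : ∀ α ∈ pos, ∃ c : Fin n → ℝ, (∀ i, 0 ≤ c i) ∧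
    highest - α = ∑ i, c i • simple i
  irreducible : ∀ A B : Set (Fin n), A ∪ B = Set.univ → A ∩ B = ∅ →
    (∀ i ∈ A, ∀ j ∈ B, ⟪simple i, simple j⟫ = 0) → A = ∅ ∨ B = ∅

variable {n : ℕ}

/-- The coroot `α^∨ = 2α/⟨α,α⟩`. -/
def coroot (α : V n) : V n := (2 / ⟪α, α⟫) • α

/-- The affine hyperplane `H_{α,k} = {v : ⟨α,v⟩ = k}`. -/
def Hy (α : V n) (k : ℝ) : Set (V n) := {v | ⟪α, v⟫ = k}

/-- The closed half-space `{v : ⟨α,v⟩ ≥ k}`. -/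
def Hge (α : V n) (k : ℝ) : Set (V n) := {v | k ≤ ⟪α, v⟫}

/-- The closed half-space `{v : ⟨α,v⟩ ≤ k}`. -/
def Hle (α : V n) (k : ℝ) : Set (V n) := {v | ⟪α, v⟫ ≤ k}

/-- The affine reflection `s_{α,k}` fixing `H_{α,k}` pointwise. -/
def sRefl (α : V n) (k : ℝ) : V n → V n := fun v => v - (⟪α, v⟫ - k) • coroot α

/-- The coroot lattice `R^∨ = ⊕ᵢ ℤ αᵢ^∨`. -/
def corootLattice (D : RootData n) : Set (V n) :=
  {μ | ∃ c : Fin n → ℤ, μ = ∑ i, (c i : ℝ) • coroot (D.simple i)}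

/-- The affine Weyl group `W`, as the group of permutations of `V` generated by all
affine reflections `s_{α,k}` with `α ∈ Φ`, `k ∈ ℤ`. -/
def AffW (D : RootData n) : Subgroup (Equiv.Perm (V n)) :=
  Subgroup.closure {e : Equiv.Perm (V n) | ∃ α ∈ D.Φ, ∃ k : ℤ, ⇑e = sRefl α (k : ℝ)}

/-- The finite Weyl group `W₀`, generated by the linear reflections `s_{α,0}`. -/
def FinW (D : RootData n) : Subgroup (Equiv.Perm (V n)) :=
  Subgroup.closure {e : Equiv.Perm (V n) | ∃ α ∈ D.Φ, ⇑e = sRefl α 0}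

/-- The Coxeter generating set `S = {s₀, s₁, …, sₙ}` of the affine Weyl group. -/
def SGen (D : RootData n) : Set (AffW D) :=
  {s | ⇑(s : Equiv.Perm (V n)) = sRefl D.highest 1 ∨
       ∃ i : Fin n, ⇑(s : Equiv.Perm (V n)) = sRefl (D.simple i) 0}

/-- The Coxeter length of `y ∈ W` with respect to `S`. -/
def lenW (D : RootData n) (y : AffW D) : ℕ :=
  sInf {m | ∃ l : List (AffW D), (∀ s ∈ l, s ∈ SGen D) ∧ l.length = m ∧ l.prod = y}

/-- The fundamental alcove `𝐚_f`. -/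
def fund (D : RootData n) : Set (V n) :=
  {v | (∀ i, 0 ≤ ⟪D.simple i, v⟫) ∧ ⟪D.highest, v⟫ ≤ 1}

/-- The union of all the hyperplanes `H_{α,k}`. -/
def wallUnion (D : RootData n) : Set (V n) := ⋃ α ∈ D.Φ, ⋃ k : ℤ, Hy α (k : ℝ)

/-- An alcove: the closure of a connected component of the complement of all walls. -/
def IsAlcove (D : RootData n) (c : Set (V n)) : Prop :=
  ∃ v ∈ (wallUnion D)ᶜ, c = closure (connectedComponentIn (wallUnion D)ᶜ v)

/-- A (closed) face of the Coxeter complex: the closure of an equivalence class of points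
having the same position relative to every hyperplane of the arrangement. -/
def IsFace (D : RootData n) (F : Set (V n)) : Prop :=
  ∃ v : V n, F = closure {w | ∀ α ∈ D.Φ, ∀ k : ℤ,
    (⟪α, w⟫ = (k : ℝ) ↔ ⟪α, v⟫ = (k : ℝ)) ∧ (⟪α, w⟫ < (k : ℝ) ↔ ⟪α, v⟫ < (k : ℝ))}

/-- The set of all hyperplanes of the affine arrangement, as subsets of `V`. -/
def hyperplanes (D : RootData n) : Set (Set (V n)) :=
  {H | ∃ α ∈ D.Φ, ∃ k : ℤ, H = Hy α (k : ℝ)}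

/-- `p` is a panel (codimension-one face) of the alcove `c`: it is the intersection of `c`
with a wall, and it lies in exactly one hyperplane (its supporting hyperplane). -/
def IsPanelOf (D : RootData n) (p c : Set (V n)) : Prop :=
  IsAlcove D c ∧ IsFace D p ∧ (∃ H ∈ hyperplanes D, p = c ∩ H) ∧
    ∃! H, H ∈ hyperplanes D ∧ p ⊆ H

/-- The action of an element of the affine Weyl group on subsets of `V`. -/
def actW {D : RootData n} (x : AffW D) (A : Set (V n)) : Set (V n) :=
  ⇑(x : Equiv.Perm (V n)) '' A

/-- The data of a finite combinatorial gallery `(p₀, c₀, p₁, …, p_l, c_l, p_{l+1})`: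
`len = l`, alcoves `c 0, …, c len` and faces `p 0, …, p (len+1)`. -/
structure PreGallery (n : ℕ) where
  len : ℕ
  p : ℕ → Set (V n)
  c : ℕ → Set (V n)

/-- The gallery conditions for the data of a combinatorial gallery. -/
def IsGallery (D : RootData n) (γ : PreGallery n) : Prop :=
  (∀ i ≤ γ.len, IsAlcove D (γ.c i)) ∧
  (IsFace D (γ.p 0) ∧ γ.p 0 ⊆ γ.c 0) ∧
  (IsFace D (γ.p (γ.len + 1)) ∧ γ.p (γ.len + 1) ⊆ γ.c γ.len) ∧
  ∀ i, 1 ≤ i → i ≤ γ.len → IsPanelOf D (γ.p i) (γ.c (i - 1)) ∧ IsPanelOf D (γ.p i) (γ.c i)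

/-- A gallery is positively folded with respect to an orientation `φ` if whenever it has a
fold at `pᵢ` (i.e. `c_{i-1} = c_i`), `φ(cᵢ, pᵢ) = +`. -/
def PositivelyFolded (φ : Set (V n) → Set (V n) → Prop) (γ : PreGallery n) : Prop :=
  ∀ i, 1 ≤ i → i ≤ γ.len → γ.c (i - 1) = γ.c i → φ (γ.c i) (γ.p i)

/-- `X` and `Y` lie in a common closed half-space bounded by `H_{α,k}`. -/
def sameSide (α : V n) (k : ℝ) (X Y : Set (V n)) : Prop :=
  (X ⊆ Hge α k ∧ Y ⊆ Hge α k) ∨ (X ⊆ Hle α k ∧ Y ⊆ Hle α k)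

/-- The hyperplane `H_{α,k}` separates `X` from `Y` (they lie in opposite closed
half-spaces). -/
def Separates (α : V n) (k : ℝ) (X Y : Set (V n)) : Prop :=
  (X ⊆ Hge α k ∧ Y ⊆ Hle α k) ∨ (X ⊆ Hle α k ∧ Y ⊆ Hge α k)

/-- The orientation induced by an alcove `A`: `φ(c,p) = +` iff the closed half-space bounded
by the supporting hyperplane of `p` which contains `c` does not contain `A`. -/
def alcoveOrient (D : RootData n) (A : Set (V n)) : Set (V n) → Set (V n) → Prop :=
  fun c p => ∀ α ∈ D.Φ, ∀ k : ℤ, p ⊆ Hy α (k : ℝ) → ¬ sameSide α (k : ℝ) c A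

/-- Two faces have the same type iff they lie in the same orbit of the affine Weyl group. -/
def SameTypeFace (D : RootData n) (σ σ' : Set (V n)) : Prop :=
  ∃ x : Equiv.Perm (V n), x ∈ AffW D ∧ σ' = ⇑x '' σ

/-- Two galleries have the same type iff they have the same length and corresponding
faces (first face, panels, last face) have the same types. -/
def SameTypeGallery (D : RootData n) (γ γ' : PreGallery n) : Prop :=
  γ.len = γ'.len ∧ ∀ i ≤ γ.len + 1, SameTypeFace D (γ.p i) (γ'.p i)

/-- A gallery is minimal if it has minimal length among all galleries with the same first
and last faces. -/
def IsMinimal (D : RootData n) (γ : PreGallery n) : Prop :=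
  IsGallery D γ ∧ ∀ γ' : PreGallery n, IsGallery D γ' → γ'.p 0 = γ.p 0 →
    γ'.p (γ'.len + 1) = γ.p (γ.len + 1) → γ.len ≤ γ'.len

/-- The shadow with respect to the orientation `φ`, relative to a fixed (minimal) gallery
`γ`: the set of final simplices of all galleries of the same type as `γ`, with the same
first face, which are positively folded with respect to `φ`. -/
def Shadow (D : RootData n) (φ : Set (V n) → Set (V n) → Prop) (γ : PreGallery n) :
    Set (Set (V n)) :=
  {ζ | ∃ γ' : PreGallery n, IsGallery D γ' ∧ SameTypeGallery D γ γ' ∧ γ'.p 0 = γ.p 0 ∧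
    PositivelyFolded φ γ' ∧ ζ = γ'.p (γ'.len + 1)}

/-- The vertex version of the shadow: the set of points `μ` whose corresponding vertex
(the singleton face `{μ}`) is a final simplex of a positively folded gallery of the
appropriate type. -/
def VShadow (D : RootData n) (φ : Set (V n) → Set (V n) → Prop) (γ : PreGallery n) :
    Set (V n) :=
  {μ | ({μ} : Set (V n)) ∈ Shadow D φ γ}

/-- The orbit `W₀ · λ` of a point under the finite Weyl group. -/
def W0orbit (D : RootData n) (lam : V n) : Set (V n) :=
  {v | ∃ w ∈ FinW D, v = w lam}

/-- The closed half-space bounded by `H_{α,k}` which contains the fundamental alcove. -/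
def HalfId (D : RootData n) (α : V n) (k : ℝ) : Set (V n) :=
  if fund D ⊆ Hge α k then Hge α k else Hle α k

/-- `[j,m]` is a (finite) `H_{α,k}`-protrusion of `γ`. -/
def IsProtrusionFin (D : RootData n) (γ : PreGallery n) (α : V n) (k : ℝ) (j m : ℕ) : Prop :=
  j < m ∧ m ≤ γ.len + 1 ∧ γ.p j ⊆ Hy α k ∧ γ.p m ⊆ Hy α k ∧
    ∀ i, j ≤ i → i < m → ¬ γ.c i ⊆ HalfId D α k

/-- `[j,∞)` is an (infinite) `H_{α,k}`-protrusion of `γ`. -/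
def IsProtrusionInf (D : RootData n) (γ : PreGallery n) (α : V n) (k : ℝ) (j : ℕ) : Prop :=
  j ≤ γ.len + 1 ∧ γ.p j ⊆ Hy α k ∧ ∀ i, j ≤ i → i ≤ γ.len → ¬ γ.c i ⊆ HalfId D α k

/-- The set of indices reflected by the maximal `H`-outcrop: the union of (the index sets
of) all `H`-protrusions. -/
def maxOutcrop (D : RootData n) (γ : PreGallery n) (α : V n) (k : ℝ) : Set ℕ :=
  {i | (∃ j m, IsProtrusionFin D γ α k j m ∧ j ≤ i ∧ i < m) ∨
       (∃ j, IsProtrusionInf D γ α k j ∧ j ≤ i)}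

/-- `[j,m]` is a (finite) `H_{α,k}`-indentation of `γ`. -/
def IsIndentationFin (D : RootData n) (γ : PreGallery n) (α : V n) (k : ℝ) (j m : ℕ) : Prop :=
  1 ≤ j ∧ j < m ∧ m ≤ γ.len + 1 ∧ γ.p j ⊆ Hy α k ∧ γ.p m ⊆ Hy α k ∧
    ∀ i, j ≤ i → i < m → γ.c i ⊆ HalfId D α k

/-- `[j,∞)` is an (infinite) `H_{α,k}`-indentation of `γ`. -/
def IsIndentationInf (D : RootData n) (γ : PreGallery n) (α : V n) (k : ℝ) (j : ℕ) : Prop :=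
  1 ≤ j ∧ j ≤ γ.len + 1 ∧ γ.p j ⊆ Hy α k ∧ ∀ i, j ≤ i → i ≤ γ.len → γ.c i ⊆ HalfId D α k

/-- The set of indices reflected by the maximal `H`-ingrowth: the union of (the index sets
of) all `H`-indentations. -/
def maxIngrowth (D : RootData n) (γ : PreGallery n) (α : V n) (k : ℝ) : Set ℕ :=
  {i | (∃ j m, IsIndentationFin D γ α k j m ∧ j ≤ i ∧ i < m) ∨
       (∃ j, IsIndentationInf D γ α k j ∧ j ≤ i)}

/-- The operators `e_H^L` and `f_H^L`: reflect in `H_{α,k}` those alcoves (and the faces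
in between) whose indices belong to `L`.  (Since the bounding faces of a protrusion or
indentation lie in `H`, they are fixed pointwise by the reflection, so this uniform
description agrees with the usual one.) -/
def flipGallery (α : V n) (k : ℝ) (L : Set ℕ) (γ : PreGallery n) : PreGallery n :=
  ⟨γ.len,
   fun i => if i ∈ L then sRefl α k '' γ.p i else γ.p i,
   fun i => if i ∈ L then sRefl α k '' γ.c i else γ.c i⟩

/-- `P` is the index set of a single `H`-protrusion. -/
def IsFlipProtrusion (D : RootData n) (γ : PreGallery n) (α : V n) (k : ℝ) (P : Set ℕ) :
    Prop :=
  (∃ j m, IsProtrusionFin D γ α k j m ∧ P = Set.Ico j m) ∨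
  (∃ j, IsProtrusionInf D γ α k j ∧ P = Set.Ici j)

/-- `P` is the index set of a single `H`-indentation. -/
def IsFlipIndentation (D : RootData n) (γ : PreGallery n) (α : V n) (k : ℝ) (P : Set ℕ) :
    Prop :=
  (∃ j m, IsIndentationFin D γ α k j m ∧ P = Set.Ico j m) ∨
  (∃ j, IsIndentationInf D γ α k j ∧ P = Set.Ici j)

/-- `L` is an `H`-outcrop: a disjoint union of `H`-protrusions. -/
def IsOutcrop (D : RootData n) (γ : PreGallery n) (α : V n) (k : ℝ) (L : Set ℕ) : Prop :=
  ∃ C : Set (Set ℕ), (∀ P ∈ C, IsFlipProtrusion D γ α k P) ∧ C.Pairwise Disjoint ∧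
    L = ⋃₀ C

/-- `L` is an `H`-ingrowth: a disjoint union of `H`-indentations. -/
def IsIngrowth (D : RootData n) (γ : PreGallery n) (α : V n) (k : ℝ) (L : Set ℕ) : Prop :=
  ∃ C : Set (Set ℕ), (∀ P ∈ C, IsFlipIndentation D γ α k P) ∧ C.Pairwise Disjoint ∧
    L = ⋃₀ C

/-- The dominant Weyl chamber `C_f`. -/
def Cf (D : RootData n) : Set (V n) := {v | ∀ α ∈ D.pos, 0 ≤ ⟪α, v⟫}

/-- The closed half-space `α^{k,w}` bounded by `H_{α,k}` which contains a subsector of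
the Weyl chamber `w·C_f`. -/
def halfFor (D : RootData n) (α : V n) (k : ℝ) (w : Equiv.Perm (V n)) : Set (V n) :=
  if ∀ v ∈ Cf D, 0 ≤ ⟪α, w v⟫ then Hge α k else Hle α k

/-- The sub-root system `Φ_J` spanned by the simple roots indexed by `J`. -/
def PhiJ (D : RootData n) (J : Set (Fin n)) : Set (V n) :=
  {α | α ∈ D.Φ ∧ α ∈ Submodule.span ℝ (D.simple '' J)}

/-- The positive roots `Φ_J⁺` of the sub-root system `Φ_J`. -/
def PhiJpos (D : RootData n) (J : Set (Fin n)) : Set (V n) := D.pos ∩ PhiJ D J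

/-- `w0` is the longest element of the finite Weyl group: it maps the dominant Weyl chamber
to the antidominant one. -/
def IsLongest (D : RootData n) (w0 : Equiv.Perm (V n)) : Prop :=
  w0 ∈ FinW D ∧ ⇑w0 '' Cf D = {v | -v ∈ Cf D}

/-- The `J`-chimney `ξ_J`, a collection of closed half-spaces. -/
def chimney (D : RootData n) (J : Set (Fin n)) (w0 : Equiv.Perm (V n)) : Set (Set (V n)) :=
  {h | ∃ α ∈ PhiJpos D J, ∃ k : ℤ, k ≤ 0 ∧ h = halfFor D α (k : ℝ) 1} ∪
  {h | ∃ α ∈ PhiJpos D J, ∃ k : ℤ, 1 ≤ k ∧ h = halfFor D α (k : ℝ) w0} ∪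
  {h | ∃ β ∈ D.pos \ PhiJpos D J, ∃ k : ℤ, h = halfFor D β (k : ℝ) w0}

/-- The `(J,y)`-chimney `ξ_{J,y} = y · ξ_J`. -/
def chimneyY (D : RootData n) (J : Set (Fin n)) (w0 : Equiv.Perm (V n)) (y : AffW D) :
    Set (Set (V n)) :=
  {h | ∃ h' ∈ chimney D J w0, h = actW y h'}

/-- The orientation `φ_{J,y}` induced by the `(J,y)`-chimney: `φ(c,p) = +` iff the closed
half-space bounded by the supporting hyperplane of `p` which contains `c` is not an
element of `ξ_{J,y}`. -/
def chimneyOrient (D : RootData n) (J : Set (Fin n)) (w0 : Equiv.Perm (V n)) (y : AffW D) :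
    Set (V n) → Set (V n) → Prop :=
  fun c p => ∀ α ∈ D.Φ, ∀ k : ℤ, p ⊆ Hy α (k : ℝ) →
    ¬ ((c ⊆ Hge α (k : ℝ) ∧ Hge α (k : ℝ) ∈ chimneyY D J w0 y) ∨
       (c ⊆ Hle α (k : ℝ) ∧ Hle α (k : ℝ) ∈ chimneyY D J w0 y))

/-- The `J`-sector determined by integers `n_β`, `β ∈ Φ⁺ ∖ Φ_J⁺`. -/
def sectorJ (D : RootData n) (J : Set (Fin n)) (w0 : Equiv.Perm (V n)) (nb : V n → ℤ) :
    Set (V n) :=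
  (⋂ α ∈ PhiJpos D J, halfFor D α 0 1 ∩ halfFor D α 1 w0) ∩
  ⋂ β ∈ D.pos \ PhiJpos D J, halfFor D β (nb β : ℝ) w0

/-- The `(J,y)`-sector `y · S_J({n_β})`. -/
def sectorJY (D : RootData n) (J : Set (Fin n)) (w0 : Equiv.Perm (V n)) (y : AffW D)
    (nb : V n → ℤ) : Set (V n) :=
  actW y (sectorJ D J w0 nb)

/-- The data of an infinite combinatorial gallery `(p₀, c₀, p₁, c₁, …)`. -/
structure InfPreGallery (n : ℕ) where
  p : ℕ → Set (V n)
  c : ℕ → Set (V n)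

/-- The gallery conditions for an infinite combinatorial gallery. -/
def IsInfGallery (D : RootData n) (Γ : InfPreGallery n) : Prop :=
  (∀ i, IsAlcove D (Γ.c i)) ∧ IsFace D (Γ.p 0) ∧ Γ.p 0 ⊆ Γ.c 0 ∧
    ∀ i, 1 ≤ i → IsPanelOf D (Γ.p i) (Γ.c (i - 1)) ∧ IsPanelOf D (Γ.p i) (Γ.c i)

/-- The initial finite subgallery `(p₀, c₀, …, p_{m+1})` of an infinite gallery. -/
def truncGallery (Γ : InfPreGallery n) (m : ℕ) : PreGallery n := ⟨m, Γ.p, Γ.c⟩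

/-- An infinite gallery is minimal if every initial finite subgallery is minimal. -/
def InfMinimal (D : RootData n) (Γ : InfPreGallery n) : Prop :=
  ∀ m : ℕ, IsMinimal D (truncGallery Γ m)

/-- Regularity of a (minimal infinite) gallery with respect to the `(J,y)`-sector, where
`y = t^μ u`. -/
def RegularWrt (D : RootData n) (J : Set (Fin n)) (w0 u : Equiv.Perm (V n)) (μ : V n)
    (nb : V n → ℤ) (Γ : InfPreGallery n) : Prop :=
  ∀ β ∈ D.pos \ PhiJpos D J, ∀ k : ℤ,
    halfFor D (u β) (k : ℝ) (u * w0) ⊆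
      halfFor D (u β) ((nb β : ℝ) + ⟪u β, μ⟫) (u * w0) →
    ∃ i, Γ.c i ⊆ halfFor D (u β) (k : ℝ) (u * w0)

/-- The panel of the fundamental alcove fixed by the generator `s ∈ S` (determining the
type of a panel). -/
def fixedPanelType {D : RootData n} (s : AffW D) : Set (V n) :=
  fund D ∩ {v | (s : Equiv.Perm (V n)) v = v}

/-- `γ` has type `(type(σ0), s_{j₁}, …, s_{j_l}, type(τ))` where the `s_{jᵢ}` are the
entries of the word `l`. -/
def HasWordType (D : RootData n) (γ : PreGallery n) (σ0 : Set (V n)) (l : List (AffW D))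
    (τ : Set (V n)) : Prop :=
  γ.len = l.length ∧ SameTypeFace D σ0 (γ.p 0) ∧ SameTypeFace D τ (γ.p (γ.len + 1)) ∧
    ∀ i, ∀ h : i < l.length, SameTypeFace D (fixedPanelType (l.get ⟨i, h⟩)) (γ.p (i + 1))

/-- `l` is a reduced word for `w ∈ W`. -/
def IsReducedWord (D : RootData n) (l : List (AffW D)) (w : AffW D) : Prop :=
  (∀ s ∈ l, s ∈ SGen D) ∧ l.prod = w ∧ l.length = lenW D w

end

namespace SectorProof

noncomputable section

open Filter Set

variable {n : ℕ}

/-! ### Basic inner-product facts -/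

lemma inner_sub_eq (α v w : V n) : ⟪α, v - w⟫ = ⟪α, v⟫ - ⟪α, w⟫ := inner_sub_right α v w

/-- A "nice" permutation: an orthogonal linear map preserving `Φ`. -/
def Nice (D : RootData n) (g : Equiv.Perm (V n)) : Prop :=
  (∀ v w : V n, ⟪g v, g w⟫ = ⟪v, w⟫) ∧ (∀ a b : V n, g (a + b) = g a + g b) ∧
  (∀ (r : ℝ) (a : V n), g (r • a) = r • g a) ∧ (∀ a ∈ D.Φ, g a ∈ D.Φ)

lemma Nice.inv {D : RootData n} {g : Equiv.Perm (V n)} (h : Nice D g) : Nice D g⁻¹ := by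
  obtain ⟨h1, h2, h3, h4⟩ := h
  refine ⟨?_, ?_, ?_, ?_⟩
  · intro v w
    have := h1 (g⁻¹ v) (g⁻¹ w)
    simpa using this.symm
  · intro a b
    apply g.injective
    have : g (g⁻¹ a + g⁻¹ b) = a + b := by rw [h2]; simp
    simpa using this.symm
  · intro r a
    apply g.injective
    have : g (r • g⁻¹ a) = r • a := by rw [h3]; simp
    simpa using this.symm
  · intro a ha
    have himg : ⇑g '' D.Φ = D.Φ := by
      apply Set.eq_of_subset_of_ncard_le
      · rintro _ ⟨b, hb, rfl⟩; exact h4 b hb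
      · rw [Set.ncard_image_of_injective _ g.injective]
      · exact D.finite
    rw [← himg] at ha
    obtain ⟨b, hb, hba⟩ := ha
    have : g⁻¹ a = b := by rw [← hba]; simp
    rwa [this]

lemma Nice.mul {D : RootData n} {g h : Equiv.Perm (V n)} (hg : Nice D g) (hh : Nice D h) :
    Nice D (g * h) := by
  obtain ⟨g1, g2, g3, g4⟩ := hg
  obtain ⟨h1, h2, h3, h4⟩ := hh
  exact ⟨fun v w => by simp [Equiv.Perm.mul_apply, g1, h1],
    fun a b => by simp [Equiv.Perm.mul_apply, h2, g2],
    fun r a => by simp [Equiv.Perm.mul_apply, h3, g3],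
    fun a ha => g4 _ (h4 a ha)⟩

lemma Nice.one (D : RootData n) : Nice D 1 :=
  ⟨fun v w => rfl, fun a b => rfl, fun r a => rfl, fun a ha => ha⟩

lemma inner_self_ne (α : V n) (h : α ≠ 0) : ⟪α, α⟫ ≠ 0 :=
  fun h0 => h ((@inner_self_eq_zero ℝ _ _ _ _ α).1 h0)

lemma sRefl_zero_apply (α v : V n) : sRefl α 0 v = v - ((2 / ⟪α, α⟫) * ⟪α, v⟫) • α := by
  simp [sRefl, coroot, smul_smul]
  ring_nf

lemma nice_of_gen {D : RootData n} {α : V n} (hα : α ∈ D.Φ) {e : Equiv.Perm (V n)}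
    (he : ⇑e = sRefl α 0) : Nice D e := by
  have hS : ⟪α, α⟫ ≠ 0 := inner_self_ne α (D.nonzero α hα)
  have happ : ∀ v, e v = v - ((2 / ⟪α, α⟫) * ⟪α, v⟫) • α := by
    intro v; rw [show e v = sRefl α 0 v from congrFun he v, sRefl_zero_apply]
  refine ⟨?_, ?_, ?_, ?_⟩
  · intro v w
    rw [happ, happ]
    simp only [inner_sub_left, inner_sub_right, real_inner_smul_left, real_inner_smul_right]
    rw [real_inner_comm w α, real_inner_comm v α]
    set S := ⟪α,α⟫ with hSdef
    set A := ⟪α,v⟫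
    set B := ⟪α,w⟫
    field_simp
    ring
  · intro a b
    rw [happ, happ, happ, inner_add_right]
    module
  · intro r a
    rw [happ, happ, real_inner_smul_right]
    module
  · intro a ha
    rw [happ]
    have := D.reflect_mem α hα a ha
    have heq : (2 * ⟪α, a⟫ / ⟪α, α⟫) = ((2 / ⟪α, α⟫) * ⟪α, a⟫) := by ring
    rwa [heq] at this

lemma nice_of_mem_FinW (D : RootData n) {g : Equiv.Perm (V n)} (hg : g ∈ FinW D) :
    Nice D g := by
  induction hg using Subgroup.closure_induction with
  | mem x hx => obtain ⟨α, hα, he⟩ := hx; exact nice_of_gen hα he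
  | one => exact Nice.one D
  | mul x y hx hy ihx ihy => exact ihx.mul ihy
  | inv x hx ih => exact ih.inv

lemma Nice.inner_apply_right {D : RootData n} {g : Equiv.Perm (V n)} (h : Nice D g)
    (α z : V n) : ⟪α, g z⟫ = ⟪g⁻¹ α, z⟫ := by
  conv_lhs => rw [show α = g (g⁻¹ α) by simp]
  exact h.1 _ _

lemma Nice.inner_inv_right {D : RootData n} {g : Equiv.Perm (V n)} (h : Nice D g)
    (α z : V n) : ⟪α, g⁻¹ z⟫ = ⟪g α, z⟫ := by
  conv_lhs => rw [show α = g⁻¹ (g α) by simp]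
  exact h.inv.1 _ _

lemma Nice.map_zero {D : RootData n} {g : Equiv.Perm (V n)} (h : Nice D g) : g 0 = 0 := by
  have := h.2.2.1 0 0
  simpa using this

end

end SectorProof
namespace SectorProof

noncomputable section

variable {n : ℕ}

/-! ### Integrality of pairings with the coroot lattice -/

lemma inner_coroot_int (D : RootData n) {α β : V n} (hα : α ∈ D.Φ) (hβ : β ∈ D.Φ) :
    ∃ z : ℤ, ⟪α, coroot β⟫ = (z : ℝ) := by
  obtain ⟨m, hm⟩ := D.crystallographic β hβ α hα
  refine ⟨m, ?_⟩
  rw [← hm, coroot, real_inner_smul_right, real_inner_comm α β]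
  ring

lemma mu_int (D : RootData n) {μ : V n} (hμ : μ ∈ corootLattice D) {α : V n}
    (hα : α ∈ D.Φ) : ∃ z : ℤ, ⟪α, μ⟫ = (z : ℝ) := by
  obtain ⟨c, rfl⟩ := hμ
  have h : ∀ i : Fin n, ∃ z : ℤ, ⟪α, coroot (D.simple i)⟫ = (z : ℝ) := fun i =>
    inner_coroot_int D hα (D.pos_sub (D.simple_mem i))
  choose f hf using h
  refine ⟨∑ i, c i * f i, ?_⟩
  rw [inner_sum]
  push_cast
  congr 1
  ext i
  rw [real_inner_smul_right, hf]

/-! ### Parallelism -/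

lemma parallel_of_ker_le {β α : V n} (hβ : β ≠ 0)
    (h : ∀ x : V n, ⟪β, x⟫ = 0 → ⟪α, x⟫ = 0) : ∃ c : ℝ, α = c • β := by
  set c := ⟪β, α⟫ / ⟪β, β⟫ with hc
  have hS : ⟪β, β⟫ ≠ 0 := inner_self_ne β hβ
  refine ⟨c, ?_⟩
  have h1 : ⟪β, α - c • β⟫ = 0 := by
    rw [inner_sub_right, real_inner_smul_right, hc, div_mul_cancel₀ _ hS, sub_self]
  have h2 : ⟪α, α - c • β⟫ = 0 := h _ h1
  have h3 : ⟪α - c • β, α - c • β⟫ = 0 := by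
    rw [inner_sub_left, real_inner_smul_left, h2, h1]
    ring
  have h4 : α - c • β = 0 := (@inner_self_eq_zero ℝ _ _ _ _ _).1 h3
  exact sub_eq_zero.1 h4

lemma Hy_eq_of_parallel {β : V n} {k : ℝ} {c : ℝ} (hc : c ≠ 0) :
    Hy (c • β) (c * k) = Hy β k := by
  ext x
  simp only [Hy, Set.mem_setOf_eq, real_inner_smul_left]
  constructor
  · intro h; exact mul_left_cancel₀ hc h
  · intro h; rw [h]

lemma Hy_eq_iff {β β' : V n} {k k' : ℝ} (hβ : β ≠ 0) (hβ' : β' ≠ 0)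
    (hset : Hy β k = Hy β' k') : ∃ c : ℝ, c ≠ 0 ∧ β' = c • β ∧ k' = c * k := by
  have hS : ⟪β, β⟫ ≠ 0 := inner_self_ne β hβ
  set z0 : V n := (k / ⟪β, β⟫) • β with hz0
  have hz0mem : ⟪β, z0⟫ = k := by
    rw [hz0, real_inner_smul_right]; exact div_mul_cancel₀ k hS
  have hz0' : ⟪β', z0⟫ = k' := by
    have : z0 ∈ Hy β k := hz0mem
    rw [hset] at this; exact this
  have hker : ∀ x : V n, ⟪β, x⟫ = 0 → ⟪β', x⟫ = 0 := by
    intro x hx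
    have : z0 + x ∈ Hy β k := by
      simp only [Hy, Set.mem_setOf_eq, inner_add_right, hz0mem, hx, add_zero]
    rw [hset] at this
    have h2 : ⟪β', z0⟫ + ⟪β', x⟫ = k' := by
      rw [← inner_add_right]; exact this
    rw [hz0'] at h2; linarith
  obtain ⟨c, hcc⟩ := parallel_of_ker_le hβ hker
  have hc0 : c ≠ 0 := by
    intro h; rw [h, zero_smul] at hcc; exact hβ' hcc
  refine ⟨c, hc0, hcc, ?_⟩
  rw [← hz0', hcc, real_inner_smul_left, hz0mem]

/-! ### Off-wall points, classes and boxes -/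

def offWall (D : RootData n) (v : V n) : Prop := ∀ α ∈ D.Φ, ∀ q : ℤ, ⟪α, v⟫ ≠ (q : ℝ)

lemma offWall_iff (D : RootData n) (v : V n) : v ∈ (wallUnion D)ᶜ ↔ offWall D v := by
  simp only [wallUnion, Set.mem_compl_iff, Set.mem_iUnion, Hy, Set.mem_setOf_eq, not_exists,
    offWall]

/-- The sign class of a point. -/
def cls (D : RootData n) (v : V n) : Set (V n) :=
  {w | ∀ α ∈ D.Φ, ∀ k : ℤ,
    (⟪α, w⟫ = (k : ℝ) ↔ ⟪α, v⟫ = (k : ℝ)) ∧ (⟪α, w⟫ < (k : ℝ) ↔ ⟪α, v⟫ < (k : ℝ))}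

lemma isFace_closure_cls (D : RootData n) (v : V n) : IsFace D (closure (cls D v)) :=
  ⟨v, rfl⟩

lemma mem_cls_self (D : RootData n) (v : V n) : v ∈ cls D v :=
  fun _ _ _ => ⟨Iff.rfl, Iff.rfl⟩

/-- The open box containing an off-wall point. -/
def RB (D : RootData n) (v : V n) : Set (V n) :=
  {w | ∀ α ∈ D.Φ, ((⌊⟪α, v⟫⌋ : ℝ) < ⟪α, w⟫ ∧ ⟪α, w⟫ < (⌊⟪α, v⟫⌋ : ℝ) + 1)}

lemma scalar_class_iff {a b : ℝ} (ha : ∀ q : ℤ, a ≠ q) :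
    (∀ k : ℤ, (b = (k:ℝ) ↔ a = k) ∧ (b < (k:ℝ) ↔ a < k)) ↔
      ((⌊a⌋ : ℝ) < b ∧ b < (⌊a⌋ : ℝ) + 1) := by
  constructor
  · intro h
    constructor
    · rcases lt_trichotomy ((⌊a⌋ : ℝ)) b with h1 | h1 | h1
      · exact h1
      · exact absurd (((h ⌊a⌋).1).1 h1.symm) (ha ⌊a⌋)
      · exact absurd (((h ⌊a⌋).2).1 h1) (not_lt.2 (Int.floor_le a))
    · have := ((h (⌊a⌋ + 1)).2).2 (by push_cast; exact Int.lt_floor_add_one a)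
      push_cast at this
      exact this
  · intro ⟨h1, h2⟩ k
    have hbk : b ≠ (k:ℝ) := by
      intro hbk
      rcases le_or_gt k ⌊a⌋ with hk | hk
      · have : (k:ℝ) ≤ (⌊a⌋:ℝ) := by exact_mod_cast hk
        rw [hbk] at h1; linarith
      · have : (⌊a⌋:ℝ) + 1 ≤ (k:ℝ) := by exact_mod_cast hk
        rw [hbk] at h2; linarith
    refine ⟨⟨fun h => absurd h hbk, fun h => absurd h (ha k)⟩, ?_⟩
    rcases le_or_gt k ⌊a⌋ with hk | hk
    · have hkr : (k:ℝ) ≤ (⌊a⌋:ℝ) := by exact_mod_cast hk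
      constructor
      · intro h; linarith
      · intro h
        have := Int.floor_le a
        linarith
    · have hkr : (⌊a⌋:ℝ) + 1 ≤ (k:ℝ) := by exact_mod_cast hk
      have := Int.lt_floor_add_one a
      constructor
      · intro _; linarith
      · intro _; linarith

lemma scalar_class_int {a b : ℝ} {k0 : ℤ} (ha : a = (k0:ℝ)) :
    (∀ k : ℤ, (b = (k:ℝ) ↔ a = k) ∧ (b < (k:ℝ) ↔ a < k)) ↔ b = (k0:ℝ) := by
  constructor
  · intro h; exact ((h k0).1).2 ha
  · intro hb k
    subst ha hb
    constructor
    · exact ⟨fun h => by exact_mod_cast h, fun h => by exact_mod_cast h⟩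
    · exact Iff.rfl

lemma cls_eq_RB (D : RootData n) {v : V n} (hv : offWall D v) : cls D v = RB D v := by
  ext w
  simp only [cls, RB, Set.mem_setOf_eq]
  constructor
  · intro h α hα
    exact (scalar_class_iff (hv α hα)).1 (h α hα)
  · intro h α hα
    exact (scalar_class_iff (hv α hα)).2 (h α hα)

lemma RB_open (D : RootData n) (v : V n) : IsOpen (RB D v) := by
  have : RB D v = ⋂ α ∈ D.Φ,
      ((fun w => ⟪α, w⟫) ⁻¹' Set.Ioo ((⌊⟪α, v⟫⌋ : ℝ)) ((⌊⟪α, v⟫⌋ : ℝ) + 1)) := by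
    ext w; simp [RB, Set.mem_iInter, Set.mem_Ioo]
  rw [this]
  exact D.finite.isOpen_biInter fun α _ =>
    (isOpen_Ioo).preimage (continuous_const.inner continuous_id)

lemma RB_convex (D : RootData n) (v : V n) : Convex ℝ (RB D v) := by
  have : RB D v = ⋂ α ∈ D.Φ,
      ({w | (⌊⟪α, v⟫⌋ : ℝ) < ⟪α, w⟫} ∩ {w | ⟪α, w⟫ < (⌊⟪α, v⟫⌋ : ℝ) + 1}) := by
    ext w; simp [RB, Set.mem_iInter]
  rw [this]
  apply convex_iInter; intro α; apply convex_iInter; intro _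
  have hlin : IsLinearMap ℝ (fun w : V n => ⟪α, w⟫) :=
    ⟨fun a b => inner_add_right α a b, fun r a => real_inner_smul_right α a r⟩
  exact (convex_halfSpace_gt hlin _).inter (convex_halfSpace_lt hlin _)

lemma mem_RB_self (D : RootData n) {v : V n} (hv : offWall D v) : v ∈ RB D v := by
  intro α hα
  have h1 := Int.floor_le (⟪α, v⟫)
  have h2 := Int.lt_floor_add_one (⟪α, v⟫)
  have h3 : ⟪α, v⟫ ≠ (⌊⟪α, v⟫⌋ : ℝ) := hv α hα _
  exact ⟨lt_of_le_of_ne h1 (Ne.symm h3), h2⟩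

lemma RB_offWall (D : RootData n) (v : V n) {w : V n} (hw : w ∈ RB D v) : offWall D w := by
  intro α hα q hq
  obtain ⟨h1, h2⟩ := hw α hα
  rw [hq] at h1 h2
  have hq1 : ⌊⟪α, v⟫⌋ < q := by exact_mod_cast h1
  have hq2 : q < ⌊⟪α, v⟫⌋ + 1 := by exact_mod_cast h2
  omega

lemma RB_subset_compl (D : RootData n) (v : V n) : RB D v ⊆ (wallUnion D)ᶜ := fun w hw =>
  (offWall_iff D w).2 (RB_offWall D v hw)

lemma connectedComponentIn_eq_RB (D : RootData n) {v : V n} (hv : offWall D v) :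
    connectedComponentIn (wallUnion D)ᶜ v = RB D v := by
  apply Set.Subset.antisymm
  · -- component ⊆ RB via clopen argument
    set T := connectedComponentIn (wallUnion D)ᶜ v with hT
    have hTpre : IsPreconnected T := isPreconnected_connectedComponentIn
    have hTsub : T ⊆ (wallUnion D)ᶜ := connectedComponentIn_subset _ _
    by_contra hns
    obtain ⟨w, hwT, hwR⟩ := Set.not_subset.1 hns
    set U : Set (V n) := ⋃ α ∈ D.Φ,
      ({x | ⟪α, x⟫ < (⌊⟪α, v⟫⌋ : ℝ)} ∪ {x | (⌊⟪α, v⟫⌋ : ℝ) + 1 < ⟪α, x⟫}) with hU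
    have hUopen : IsOpen U := by
      apply isOpen_biUnion; intro α _
      have hc : Continuous (fun x : V n => ⟪α, x⟫) := continuous_const.inner continuous_id
      exact (isOpen_Iio.preimage hc).union (isOpen_Ioi.preimage hc)
    have hcover : T ⊆ RB D v ∪ U := by
      intro x hx
      by_cases hxR : x ∈ RB D v
      · exact Or.inl hxR
      · right
        simp only [RB, Set.mem_setOf_eq, not_forall] at hxR
        obtain ⟨α, hα, hcond⟩ := hxR
        have hxoff : offWall D x := (offWall_iff D x).1 (hTsub hx)
        have hne1 : ⟪α, x⟫ ≠ (⌊⟪α, v⟫⌋ : ℝ) := hxoff α hα _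
        have hne2 : ⟪α, x⟫ ≠ (⌊⟪α, v⟫⌋ : ℝ) + 1 := by
          have := hxoff α hα (⌊⟪α, v⟫⌋ + 1)
          push_cast at this; exact this
        refine Set.mem_biUnion hα ?_
        rcases not_and_or.1 hcond with h | h
        · exact Or.inl (lt_of_le_of_ne (not_lt.1 h) hne1)
        · exact Or.inr (lt_of_le_of_ne (not_lt.1 h) (Ne.symm hne2))
    have hvT : v ∈ T := mem_connectedComponentIn ((offWall_iff D v).2 hv)
    have hmeet1 : (T ∩ RB D v).Nonempty := ⟨v, hvT, mem_RB_self D hv⟩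
    have hmeet2 : (T ∩ U).Nonempty := by
      refine ⟨w, hwT, ?_⟩
      have := hcover hwT
      rcases this with h | h
      · exact absurd h hwR
      · exact h
    obtain ⟨x, hx⟩ := hTpre (RB D v) U (RB_open D v) hUopen hcover hmeet1 hmeet2
    obtain ⟨hxT, hxR, hxU⟩ := hx
    simp only [hU, Set.mem_iUnion] at hxU
    obtain ⟨α, hα, hbad⟩ := hxU
    obtain ⟨h1, h2⟩ := hxR α hα
    rcases hbad with h | h
    · simp only [Set.mem_setOf_eq] at h; linarith
    · simp only [Set.mem_setOf_eq] at h; linarith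
  · exact (RB_convex D v).isPreconnected.subset_connectedComponentIn (mem_RB_self D hv)
      (RB_subset_compl D v)

/-- The closed box. -/
def RBcl (D : RootData n) (v : V n) : Set (V n) :=
  {w | ∀ α ∈ D.Φ, ((⌊⟪α, v⟫⌋ : ℝ) ≤ ⟪α, w⟫ ∧ ⟪α, w⟫ ≤ (⌊⟪α, v⟫⌋ : ℝ) + 1)}

lemma RBcl_closed (D : RootData n) (v : V n) : IsClosed (RBcl D v) := by
  have : RBcl D v = ⋂ α ∈ D.Φ,
      ({w | (⌊⟪α, v⟫⌋ : ℝ) ≤ ⟪α, w⟫} ∩ {w | ⟪α, w⟫ ≤ (⌊⟪α, v⟫⌋ : ℝ) + 1}) := by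
    ext w; simp [RBcl, Set.mem_iInter]
  rw [this]
  apply isClosed_biInter; intro α _
  have hc : Continuous (fun x : V n => ⟪α, x⟫) := continuous_const.inner continuous_id
  exact (isClosed_le continuous_const hc).inter (isClosed_le hc continuous_const)

lemma closure_RB_subset (D : RootData n) (v : V n) : closure (RB D v) ⊆ RBcl D v := by
  apply closure_minimal _ (RBcl_closed D v)
  intro w hw α hα
  obtain ⟨h1, h2⟩ := hw α hα
  exact ⟨le_of_lt h1, le_of_lt h2⟩

lemma Hy_closed (α : V n) (k : ℝ) : IsClosed (Hy α k) :=
  isClosed_eq (continuous_const.inner continuous_id) continuous_const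

lemma Hge_closed (α : V n) (k : ℝ) : IsClosed (Hge α k) :=
  isClosed_le continuous_const (continuous_const.inner continuous_id)

lemma Hle_closed (α : V n) (k : ℝ) : IsClosed (Hle α k) :=
  isClosed_le (continuous_const.inner continuous_id) continuous_const

/-! ### Alcoves lie on one side of each wall -/

lemma alcove_side (D : RootData n) {c : Set (V n)} (hc : IsAlcove D c) {α : V n}
    (hα : α ∈ D.Φ) (k : ℤ) : c ⊆ Hge α (k : ℝ) ∨ c ⊆ Hle α (k : ℝ) := by
  obtain ⟨v, hv, rfl⟩ := hc
  set T := connectedComponentIn (wallUnion D)ᶜ v with hT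
  have hTpre : IsPreconnected T := isPreconnected_connectedComponentIn
  have hTsub : T ⊆ (wallUnion D)ᶜ := connectedComponentIn_subset _ _
  have hne : ∀ x ∈ T, ⟪α, x⟫ ≠ (k : ℝ) := by
    intro x hx
    exact ((offWall_iff D x).1 (hTsub hx)) α hα k
  have hdich : T ⊆ {x | (k:ℝ) < ⟪α, x⟫} ∨ T ⊆ {x | ⟪α, x⟫ < (k:ℝ)} := by
    by_contra hcon
    push_neg at hcon
    obtain ⟨x1, hx1T, hx1⟩ := Set.not_subset.1 hcon.1
    obtain ⟨x2, hx2T, hx2⟩ := Set.not_subset.1 hcon.2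
    simp only [Set.mem_setOf_eq, not_lt] at hx1 hx2
    have hx1lt : ⟪α, x1⟫ < (k:ℝ) := lt_of_le_of_ne hx1 (hne x1 hx1T)
    have hx2gt : (k:ℝ) < ⟪α, x2⟫ := lt_of_le_of_ne hx2 (Ne.symm (hne x2 hx2T))
    have hc : Continuous (fun x : V n => ⟪α, x⟫) := continuous_const.inner continuous_id
    obtain ⟨x, hx⟩ := hTpre {x | ⟪α, x⟫ < (k:ℝ)} {x | (k:ℝ) < ⟪α, x⟫}
      (isOpen_Iio.preimage hc) (isOpen_Ioi.preimage hc)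
      (fun x hx => (lt_or_gt_of_ne (hne x hx)).imp id id)
      ⟨x1, hx1T, hx1lt⟩ ⟨x2, hx2T, hx2gt⟩
    obtain ⟨_, h1, h2⟩ := hx
    simp only [Set.mem_setOf_eq] at h1 h2
    linarith
  rcases hdich with h | h
  · left
    apply closure_minimal _ (Hge_closed α (k:ℝ))
    intro x hx
    have hx2 := h hx
    simp only [Set.mem_setOf_eq] at hx2
    exact le_of_lt hx2
  · right
    apply closure_minimal _ (Hle_closed α (k:ℝ))
    intro x hx
    have hx2 := h hx
    simp only [Set.mem_setOf_eq] at hx2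
    exact le_of_lt hx2

end

end SectorProof
namespace SectorProof

noncomputable section

open Filter Set Topology

variable {n : ℕ}

/-! ### Scalar floor lemmas along affine functions -/

lemma exists_between_val {v e : ℝ} {t t' : ℝ} {q : ℝ}
    (h1 : v + t * e < q ∧ q < v + t' * e ∨ v + t' * e < q ∧ q < v + t * e) :
    ∃ s, ((t < s ∧ s < t') ∨ (t' < s ∧ s < t)) ∧ v + s * e = q := by
  set a := v + t * e with ha
  set b := v + t' * e with hb
  have hab : a ≠ b := by rcases h1 with ⟨h, h'⟩ | ⟨h, h'⟩ <;> linarith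
  set s := t + (q - a) * (t' - t) / (b - a) with hs
  have hba : b - a = (t' - t) * e := by rw [ha, hb]; ring
  have hbane : b - a ≠ 0 := sub_ne_zero.2 (Ne.symm hab)
  have htt : t ≠ t' := by
    intro h; rw [h] at hba; simp at hba; rw [hba] at hbane; simp at hbane
  refine ⟨s, ?_, ?_⟩
  · have hfrac : 0 < (q - a) / (b - a) ∧ (q - a) / (b - a) < 1 := by
      rcases h1 with ⟨h, h'⟩ | ⟨h, h'⟩
      · have hb0 : 0 < b - a := by linarith
        constructor
        · apply div_pos; linarith; exact hb0
        · rw [div_lt_one hb0]; linarith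
      · have hb0 : b - a < 0 := by linarith
        constructor
        · apply div_pos_of_neg_of_neg; linarith; exact hb0
        · rw [div_lt_one_of_neg hb0]; linarith
    have hseq : s = t + ((q - a) / (b - a)) * (t' - t) := by rw [hs]; ring
    rcases lt_or_gt_of_ne htt with h | h
    · left
      constructor
      · rw [hseq]; nlinarith [hfrac.1, hfrac.2]
      · rw [hseq]; nlinarith [hfrac.1, hfrac.2]
    · right
      constructor
      · rw [hseq]; nlinarith [hfrac.1, hfrac.2]
      · rw [hseq]; nlinarith [hfrac.1, hfrac.2]
  · rw [hs]
    have : (t + (q - a) * (t' - t) / (b - a)) * e = t * e + (q - a) * ((t' - t) * e) / (b - a) := by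
      ring
    rw [this, ← hba, mul_div_assoc, div_self hbane, mul_one]
    rw [ha]; ring

lemma floor_const_of_no_int {v e : ℝ} {t t' : ℝ} (htt : t ≤ t')
    (hno : ∀ s, t ≤ s → s ≤ t' → ∀ q : ℤ, v + s * e ≠ (q : ℝ)) :
    ⌊v + t * e⌋ = ⌊v + t' * e⌋ := by
  by_contra hne
  set a := v + t * e with ha
  set b := v + t' * e with hb
  have key : ∀ q : ℤ, ¬ ((a < q ∧ (q:ℝ) < b) ∨ (b < q ∧ (q:ℝ) < a)) := by
    intro q hq
    obtain ⟨s, hs1, hs2⟩ := exists_between_val (q := (q:ℝ)) (by tauto)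
    rcases hs1 with ⟨h1, h2⟩ | ⟨h1, h2⟩
    · exact hno s (by linarith) (by linarith) q hs2
    · exact hno s (by linarith) (by linarith) q hs2
  rcases lt_or_gt_of_ne hne with h | h
  · -- ⌊a⌋ < ⌊b⌋, take q = ⌊b⌋
    apply key ⌊b⌋
    left
    constructor
    · calc a < (⌊a⌋:ℝ) + 1 := Int.lt_floor_add_one a
        _ ≤ (⌊b⌋:ℝ) := by exact_mod_cast h
    · have : b ≠ (⌊b⌋:ℝ) := hno t' htt le_rfl ⌊b⌋
      exact lt_of_le_of_ne (Int.floor_le b) (Ne.symm this)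
  · apply key ⌊a⌋
    right
    constructor
    · calc b < (⌊b⌋:ℝ) + 1 := Int.lt_floor_add_one b
        _ ≤ (⌊a⌋:ℝ) := by exact_mod_cast h
    · have : a ≠ (⌊a⌋:ℝ) := hno t le_rfl htt ⌊a⌋
      exact lt_of_le_of_ne (Int.floor_le a) (Ne.symm this)

/-- Just before an up-crossing: the value lies in `(q-1, q)`. -/
lemma val_before_crossing {v e : ℝ} {t t' : ℝ} (htt : t < t') (he : 0 < e) {q : ℤ}
    (hcross : v + t' * e = (q : ℝ))
    (hno : ∀ s, t ≤ s → s < t' → ∀ q' : ℤ, v + s * e ≠ (q' : ℝ)) :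
    ((q : ℝ) - 1 < v + t * e ∧ v + t * e < q) := by
  have hlt : v + t * e < (q:ℝ) := by
    rw [← hcross]
    have := mul_lt_mul_of_pos_right htt he
    linarith
  refine ⟨?_, hlt⟩
  by_contra hle
  push_neg at hle
  have h1 : v + t * e < ((q - 1 : ℤ):ℝ) ∨ v + t * e = ((q-1:ℤ):ℝ) := by
    push_cast
    rcases lt_or_eq_of_le hle with h | h
    · left; linarith
    · right; linarith
  rcases h1 with h | h
  · obtain ⟨s, hs1, hs2⟩ := exists_between_val (v := v) (e := e) (t := t) (t' := t')
      (q := ((q-1:ℤ):ℝ)) (Or.inl ⟨h, by push_cast; linarith [hcross]⟩)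
    rcases hs1 with ⟨ha, hb⟩ | ⟨ha, hb⟩
    · exact hno s (le_of_lt ha) hb _ hs2
    · linarith
  · exact hno t le_rfl htt _ h

/-- Just after an up-crossing: the value lies in `(q, q+1)`. -/
lemma val_after_crossing {v e : ℝ} {t t' : ℝ} (htt : t < t') (he : 0 < e) {q : ℤ}
    (hcross : v + t * e = (q : ℝ))
    (hno : ∀ s, t < s → s ≤ t' → ∀ q' : ℤ, v + s * e ≠ (q' : ℝ)) :
    ((q : ℝ) < v + t' * e ∧ v + t' * e < (q:ℝ) + 1) := by
  have hgt : (q:ℝ) < v + t' * e := by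
    rw [← hcross]
    have := mul_lt_mul_of_pos_right htt he
    linarith
  refine ⟨hgt, ?_⟩
  by_contra hle
  push_neg at hle
  have h1 : ((q + 1 : ℤ):ℝ) < v + t' * e ∨ v + t' * e = ((q+1:ℤ):ℝ) := by
    push_cast
    rcases lt_or_eq_of_le hle with h | h
    · left; linarith
    · right; exact h.symm
  rcases h1 with h | h
  · obtain ⟨s, hs1, hs2⟩ := exists_between_val (v := v) (e := e) (t := t) (t' := t')
      (q := ((q+1:ℤ):ℝ)) (Or.inl ⟨by push_cast; linarith [hcross], h⟩)
    rcases hs1 with ⟨ha, hb⟩ | ⟨ha, hb⟩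
    · exact hno s ha (le_of_lt hb) _ hs2
    · linarith
  · exact hno t' htt le_rfl _ h

lemma floor_of_Ioo {x : ℝ} {q : ℤ} (h1 : (q:ℝ) - 1 < x) (h2 : x < q) : ⌊x⌋ = q - 1 := by
  rw [Int.floor_eq_iff]
  constructor
  · push_cast; linarith
  · push_cast; linarith

lemma floor_of_Ioo' {x : ℝ} {q : ℤ} (h1 : (q:ℝ) < x) (h2 : x < (q:ℝ) + 1) : ⌊x⌋ = q := by
  rw [Int.floor_eq_iff]
  constructor
  · linarith
  · push_cast; linarith

/-! ### Segment arguments for closures -/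

lemma tendsto_seg (w z : V n) :
    Filter.Tendsto (fun ε : ℝ => w + ε • (z - w)) (𝓝[>] 0) (𝓝 w) := by
  have h : Continuous (fun ε : ℝ => w + ε • (z - w)) := by continuity
  have h2 := (h.tendsto 0).mono_left (nhdsWithin_le_nhds (s := Set.Ioi (0:ℝ)))
  simpa using h2

lemma eventually_pos : ∀ᶠ ε in 𝓝[>] (0:ℝ), 0 < ε :=
  eventually_mem_nhdsWithin

lemma ev_seg {lo hi b a : ℝ} (hb1 : lo ≤ b) (hb2 : b ≤ hi) (ha1 : lo < a) (ha2 : a < hi) :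
    ∀ᶠ ε in 𝓝[>] (0:ℝ), lo < b + ε * (a - b) ∧ b + ε * (a - b) < hi := by
  have htend : Filter.Tendsto (fun ε : ℝ => b + ε * (a - b)) (𝓝[>] 0) (𝓝 b) := by
    have h : Continuous (fun ε : ℝ => b + ε * (a - b)) := by continuity
    have h2 := (h.tendsto 0).mono_left (nhdsWithin_le_nhds (s := Set.Ioi (0:ℝ)))
    simpa using h2
  have hlow : ∀ᶠ ε in 𝓝[>] (0:ℝ), lo < b + ε * (a - b) := by
    rcases lt_or_eq_of_le hb1 with h | h
    · exact htend.eventually_const_lt h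
    · filter_upwards [eventually_pos] with ε hε
      rw [← h]
      have : 0 < ε * (a - lo) := mul_pos hε (by linarith)
      linarith
  have hhigh : ∀ᶠ ε in 𝓝[>] (0:ℝ), b + ε * (a - b) < hi := by
    rcases lt_or_eq_of_le hb2 with h | h
    · exact htend.eventually_lt_const h
    · filter_upwards [eventually_pos] with ε hε
      rw [h]
      have : ε * (a - hi) < 0 := mul_neg_of_pos_of_neg hε (by linarith)
      linarith
  exact hlow.and hhigh

lemma inner_seg (α w z : V n) (ε : ℝ) :
    ⟪α, w + ε • (z - w)⟫ = ⟪α, w⟫ + ε * (⟪α, z⟫ - ⟪α, w⟫) := by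
  rw [inner_add_right, real_inner_smul_right, inner_sub_right]

/-- Segment lemma: a point of the closed box is in the closure of the open box. -/
lemma mem_closure_RB (D : RootData n) {v w : V n} (hv : offWall D v)
    (hw : w ∈ RBcl D v) : w ∈ closure (RB D v) := by
  apply mem_closure_of_tendsto (tendsto_seg w v)
  have hall : ∀ α ∈ D.finite.toFinset, ∀ᶠ ε in 𝓝[>] (0:ℝ),
      (⌊⟪α, v⟫⌋:ℝ) < ⟪α, w + ε • (v - w)⟫ ∧ ⟪α, w + ε • (v - w)⟫ < (⌊⟪α, v⟫⌋:ℝ) + 1 := by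
    intro α hα
    rw [Set.Finite.mem_toFinset] at hα
    obtain ⟨h1, h2⟩ := hw α hα
    have hself := mem_RB_self D hv α hα
    have := ev_seg h1 h2 hself.1 hself.2
    filter_upwards [this] with ε hε
    rw [inner_seg]
    exact hε
  have := (Filter.eventually_all_finset (D.finite.toFinset)).2 hall
  filter_upwards [this] with ε hε
  intro α hα
  exact hε α (D.finite.mem_toFinset.2 hα)

/-! ### Dual basis and generic vectors -/

lemma exists_dual_family (D : RootData n) :
    ∃ f : Fin n → V n, ∀ i j : Fin n, ⟪D.simple j, f i⟫ = if i = j then 1 else 0 := by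
  classical
  set L : V n →ₗ[ℝ] (Fin n → ℝ) :=
    LinearMap.pi (fun i => (innerSL ℝ (D.simple i)).toLinearMap) with hL
  have hLapp : ∀ v j, L v j = ⟪D.simple j, v⟫ := fun v j => rfl
  have hinj : Function.Injective L := by
    rw [← LinearMap.ker_eq_bot]
    rw [Submodule.eq_bot_iff]
    intro v hv
    have hv' : ∀ j, ⟪D.simple j, v⟫ = 0 := by
      intro j
      have : L v = 0 := hv
      have := congrFun this j
      simpa [hLapp] using this
    have hspan : Submodule.span ℝ (Set.range D.simple) = ⊤ := by
      apply Submodule.eq_top_of_finrank_eq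
      rw [finrank_span_eq_card D.simple_indep]
      simp [finrank_euclideanSpace_fin]
    have hall : ∀ x : V n, ⟪x, v⟫ = 0 := by
      intro x
      have hx : x ∈ Submodule.span ℝ (Set.range D.simple) := by rw [hspan]; trivial
      induction hx using Submodule.span_induction with
      | mem x hx => obtain ⟨j, rfl⟩ := hx; exact hv' j
      | zero => exact inner_zero_left v
      | add x y _ _ hx hy => rw [inner_add_left, hx, hy, add_zero]
      | smul r x _ hx => rw [real_inner_smul_left, hx, mul_zero]
    exact (@inner_self_eq_zero ℝ _ _ _ _ v).1 (hall v)
  have hsurj : Function.Surjective L := by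
    have hfr : Module.finrank ℝ (V n) = Module.finrank ℝ (Fin n → ℝ) := by
      simp [finrank_euclideanSpace_fin]
    exact (LinearMap.injective_iff_surjective_of_finrank_eq_finrank hfr).1 hinj
  have hex : ∀ i : Fin n, ∃ v, L v = Pi.single i 1 := fun i => hsurj _
  choose f hf using hex
  refine ⟨f, fun i j => ?_⟩
  have := congrFun (hf i) j
  rw [hLapp] at this
  rw [this, Pi.single_apply]
  rcases eq_or_ne i j with h | h
  · simp [h]
  · rw [if_neg (Ne.symm h), if_neg h]

lemma exists_inner_ne_zero_finset (F : Finset (V n)) (h0 : ∀ v ∈ F, v ≠ 0) :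
    ∃ w : V n, ∀ v ∈ F, ⟪v, w⟫ ≠ 0 := by
  classical
  induction F using Finset.induction_on with
  | empty => exact ⟨0, fun v hv => absurd hv (Finset.notMem_empty v)⟩
  | @insert a F ha ih =>
    obtain ⟨w, hw⟩ := ih (fun v hv => h0 v (Finset.mem_insert_of_mem hv))
    have hane : a ≠ 0 := h0 a (Finset.mem_insert_self a F)
    by_cases hcase : ⟪a, w⟫ ≠ 0
    · refine ⟨w, fun v hv => ?_⟩
      rcases Finset.mem_insert.1 hv with rfl | hv
      · exact hcase
      · exact hw v hv
    · push_neg at hcase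
      set bad : Set ℝ := insert 0 ((fun v => -(⟪v, w⟫) / ⟪v, a⟫) '' (F : Set (V n))) with hbad
      have hbadfin : bad.Finite := ((F.finite_toSet).image _).insert 0
      obtain ⟨t, ht⟩ := hbadfin.exists_notMem
      have ht0 : t ≠ 0 := fun h => ht (h ▸ Set.mem_insert 0 _)
      refine ⟨w + t • a, fun v hv => ?_⟩
      rcases Finset.mem_insert.1 hv with rfl | hv
      · rw [inner_add_right, real_inner_smul_right, hcase, zero_add]
        intro h
        rcases mul_eq_zero.1 h with h | h
        · exact ht0 h
        · exact (inner_self_ne v hane) h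
      · rw [inner_add_right, real_inner_smul_right]
        intro h
        by_cases hva : ⟪v, a⟫ = 0
        · rw [hva, mul_zero, add_zero] at h
          exact hw v hv h
        · have hteq : t = -(⟪v, w⟫) / ⟪v, a⟫ := by
            rw [eq_div_iff hva]
            linarith
          exact ht (by rw [hbad]; exact Set.mem_insert_of_mem 0 ⟨v, hv, hteq.symm⟩)

lemma exists_inner_ne_zero {S : Set (V n)} (hS : S.Finite) (h0 : ∀ v ∈ S, v ≠ 0) :
    ∃ w : V n, ∀ v ∈ S, ⟪v, w⟫ ≠ 0 := by
  obtain ⟨w, hw⟩ := exists_inner_ne_zero_finset hS.toFinset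
    (fun v hv => h0 v (hS.mem_toFinset.1 hv))
  exact ⟨w, fun v hv => hw v (hS.mem_toFinset.2 hv)⟩

end

end SectorProof
namespace SectorProof

noncomputable section

open Filter Set Topology

variable {n : ℕ}

lemma ev_lin {lo hi a c : ℝ} (h1 : lo < a) (h2 : a < hi) :
    ∀ᶠ ε in 𝓝[>] (0:ℝ), lo < a + ε * c ∧ a + ε * c < hi := by
  have htend : Filter.Tendsto (fun ε : ℝ => a + ε * c) (𝓝[>] 0) (𝓝 a) := by
    have h : Continuous (fun ε : ℝ => a + ε * c) := by continuity
    have h2 := (h.tendsto 0).mono_left (nhdsWithin_le_nhds (s := Set.Ioi (0:ℝ)))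
    simpa using h2
  exact (htend.eventually_const_lt h1).and (htend.eventually_lt_const h2)

/-- The data of a generic ray: base point, direction, with genericity hypotheses. -/
structure Setup (D : RootData n) where
  x0 : V n
  dir : V n
  offw : ∀ α ∈ D.Φ, ∀ q : ℤ, ⟪α, x0⟫ ≠ (q : ℝ)
  uniq : ∀ α ∈ D.Φ, ∀ α' ∈ D.Φ, ∀ q q' : ℤ, ∀ t : ℝ, 0 < t →
    ⟪α, x0⟫ + t * ⟪α, dir⟫ = (q : ℝ) → ⟪α', x0⟫ + t * ⟪α', dir⟫ = (q' : ℝ) →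
    (α' = α ∧ q' = q) ∨ (α' = -α ∧ q' = -q)
  down : ∃ β0 ∈ D.Φ, ⟪β0, dir⟫ < 0

namespace Setup

variable {D : RootData n} (S : Setup D)

/-- The ray. -/
def g (t : ℝ) : V n := S.x0 + t • S.dir

lemma inner_g (α : V n) (t : ℝ) : ⟪α, S.g t⟫ = ⟪α, S.x0⟫ + t * ⟪α, S.dir⟫ := by
  rw [g, inner_add_right, real_inner_smul_right]

/-- The set of positive crossing times. -/
def Cross : Set ℝ := {t | 0 < t ∧ ∃ α ∈ D.Φ, ∃ q : ℤ, ⟪α, S.g t⟫ = (q : ℝ)}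

lemma cross_dir_ne {t : ℝ} {α : V n} (hα : α ∈ D.Φ) {q : ℤ}
    (hq : ⟪α, S.g t⟫ = (q : ℝ)) : ⟪α, S.dir⟫ ≠ 0 := by
  intro he
  rw [S.inner_g, he, mul_zero, add_zero] at hq
  exact S.offw α hα q hq

lemma offWall_of_not_cross {t : ℝ} (ht : 0 < t) (hnc : t ∉ S.Cross) :
    offWall D (S.g t) := fun α hα q hq => hnc ⟨ht, α, hα, q, hq⟩

lemma cross_finite (A B : ℝ) : (S.Cross ∩ Set.Ioc A B).Finite := by
  classical
  set Φf := D.finite.toFinset with hΦf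
  set C := |A| + |B| with hC
  set K : ℕ := Φf.sup (fun α => ⌈|⟪α, S.x0⟫| + C * |⟪α, S.dir⟫|⌉₊) with hK
  apply Set.Finite.subset (Set.Finite.image
    (f := fun p : V n × ℤ => (((p.2 : ℝ) - ⟪p.1, S.x0⟫) / ⟪p.1, S.dir⟫))
    (D.finite.prod (Set.finite_Icc (-(K:ℤ)) (K:ℤ))))
  rintro t ⟨⟨ht0, α, hα, q, hq⟩, htA, htB⟩
  have he := S.cross_dir_ne hα hq
  rw [S.inner_g] at hq
  have htabs : |t| ≤ C := by
    rw [abs_le]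
    constructor
    · have : -|A| ≤ A := neg_abs_le A
      have hB : 0 ≤ |B| := abs_nonneg B
      linarith
    · have : B ≤ |B| := le_abs_self B
      have hA : 0 ≤ |A| := abs_nonneg A
      linarith
  have hqb : |(q:ℝ)| ≤ |⟪α, S.x0⟫| + C * |⟪α, S.dir⟫| := by
    rw [← hq]
    calc |⟪α, S.x0⟫ + t * ⟪α, S.dir⟫| ≤ |⟪α, S.x0⟫| + |t * ⟪α, S.dir⟫| := abs_add_le _ _
      _ = |⟪α, S.x0⟫| + |t| * |⟪α, S.dir⟫| := by rw [abs_mul]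
      _ ≤ |⟪α, S.x0⟫| + C * |⟪α, S.dir⟫| := by
          have := abs_nonneg (⟪α, S.dir⟫)
          nlinarith
  have hqK : |(q:ℝ)| ≤ (K:ℝ) := by
    calc |(q:ℝ)| ≤ |⟪α, S.x0⟫| + C * |⟪α, S.dir⟫| := hqb
      _ ≤ (⌈|⟪α, S.x0⟫| + C * |⟪α, S.dir⟫|⌉₊ : ℝ) := Nat.le_ceil _
      _ ≤ (K:ℝ) := by
          have : (⌈|⟪α, S.x0⟫| + C * |⟪α, S.dir⟫|⌉₊ : ℕ) ≤ K :=
            Finset.le_sup (f := fun α => ⌈|⟪α, S.x0⟫| + C * |⟪α, S.dir⟫|⌉₊)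
              (D.finite.mem_toFinset.2 hα)
          exact_mod_cast this
  have hqKi : -(K:ℤ) ≤ q ∧ q ≤ (K:ℤ) := by
    have : |q| ≤ (K:ℤ) := by exact_mod_cast (by rwa [← Int.cast_abs] at hqK : ((|q|:ℤ):ℝ) ≤ (K:ℝ))
    exact abs_le.1 this
  refine ⟨(α, q), ⟨hα, hqKi.1, hqKi.2⟩, ?_⟩
  show ((q:ℝ) - ⟪α, S.x0⟫) / ⟪α, S.dir⟫ = t
  rw [div_eq_iff he]
  linarith

lemma cross_exists_between (a : ℝ) (ha : 0 ≤ a) :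
    ∃ M : ℝ, 0 < M ∧ (S.Cross ∩ Set.Ioc a (a + M)).Nonempty := by
  obtain ⟨β0, hβ0, he0⟩ := S.down
  set v0 := ⟪β0, S.g a⟫ with hv0
  set q : ℤ := ⌊v0⌋ - 1 with hq
  set M := (v0 - q) / (-⟪β0, S.dir⟫) with hM
  have hvq : 1 ≤ v0 - (q:ℝ) := by
    have := Int.floor_le v0
    push_cast [hq]
    linarith
  have hMpos : 0 < M := by
    apply div_pos (by linarith) (by linarith)
  refine ⟨M, hMpos, a + M, ⟨?_, ?_⟩, by constructor <;> [linarith; linarith]⟩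
  · linarith
  · refine ⟨β0, hβ0, q, ?_⟩
    rw [S.inner_g]
    have hva : v0 = ⟪β0, S.x0⟫ + a * ⟪β0, S.dir⟫ := S.inner_g β0 a
    have hne0 : -⟪β0, S.dir⟫ ≠ 0 := ne_of_gt (by linarith)
    have hMe : M * ⟪β0, S.dir⟫ = -(v0 - q) := by
      calc M * ⟪β0, S.dir⟫ = -(M * (-⟪β0, S.dir⟫)) := by ring
        _ = -(v0 - q) := by rw [hM, div_mul_cancel₀ _ hne0]
    nlinarith [hMe, hva]

lemma cross_least (a : ℝ) (ha : 0 ≤ a) : ∃ t, IsLeast {t | t ∈ S.Cross ∧ a < t} t := by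
  obtain ⟨M, hM, hne⟩ := S.cross_exists_between a ha
  have hfin := S.cross_finite a (a + M)
  have hne' : hfin.toFinset.Nonempty := by
    rwa [Set.Finite.toFinset_nonempty]
  set m := hfin.toFinset.min' hne' with hm
  have hmmem : m ∈ S.Cross ∩ Set.Ioc a (a + M) := by
    rw [← hfin.mem_toFinset]
    exact hfin.toFinset.min'_mem hne'
  refine ⟨m, ⟨hmmem.1, hmmem.2.1⟩, ?_⟩
  rintro t ⟨htc, hta⟩
  rcases le_or_gt t (a + M) with h | h
  · exact hfin.toFinset.min'_le t (hfin.mem_toFinset.2 ⟨htc, hta, h⟩)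
  · have := hmmem.2.2
    linarith

/-- The next crossing time after `a`. -/
def nxt (a : ℝ) : ℝ := if h : 0 ≤ a then (S.cross_least a h).choose else 1

lemma nxt_isLeast {a : ℝ} (ha : 0 ≤ a) :
    IsLeast {t | t ∈ S.Cross ∧ a < t} (S.nxt a) := by
  rw [nxt, dif_pos ha]
  exact (S.cross_least a ha).choose_spec

/-- The increasing enumeration of crossing times (with `tt 0 = 0`). -/
def tt : ℕ → ℝ := fun i => Nat.rec (0 : ℝ) (fun _ prev => S.nxt prev) i

lemma tt_zero : S.tt 0 = 0 := rfl

lemma tt_succ (i : ℕ) : S.tt (i + 1) = S.nxt (S.tt i) := rfl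

lemma tt_nonneg : ∀ i, 0 ≤ S.tt i := by
  intro i
  induction i with
  | zero => exact le_refl _
  | succ i ih =>
    have := (S.nxt_isLeast ih).1.2
    rw [tt_succ]
    linarith

lemma tt_lt_succ (i : ℕ) : S.tt i < S.tt (i + 1) := by
  rw [tt_succ]; exact (S.nxt_isLeast (S.tt_nonneg i)).1.2

lemma tt_mem_cross (i : ℕ) : S.tt (i + 1) ∈ S.Cross := by
  rw [tt_succ]; exact (S.nxt_isLeast (S.tt_nonneg i)).1.1

lemma tt_pos (i : ℕ) : 0 < S.tt (i + 1) :=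
  lt_of_le_of_lt (S.tt_nonneg i) (S.tt_lt_succ i)

lemma tt_strictMono : StrictMono S.tt :=
  strictMono_nat_of_lt_succ S.tt_lt_succ

lemma tt_gap {i : ℕ} {t : ℝ} (h1 : S.tt i < t) (h2 : t < S.tt (i + 1)) : t ∉ S.Cross := by
  intro hc
  have h3 := (S.nxt_isLeast (S.tt_nonneg i)).2 ⟨hc, h1⟩
  rw [← tt_succ] at h3
  linarith

lemma tt_unbounded (X : ℝ) : ∃ i, X < S.tt i := by
  by_contra hcon
  push_neg at hcon
  have hinj : Function.Injective (fun i : ℕ => S.tt (i + 1)) := by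
    intro a b hab
    have := S.tt_strictMono.injective hab
    omega
  have hmem : ∀ i : ℕ, S.tt (i + 1) ∈ S.Cross ∩ Set.Ioc 0 X :=
    fun i => ⟨S.tt_mem_cross i, S.tt_pos i, hcon (i + 1)⟩
  exact (Set.infinite_of_injective_forall_mem hinj hmem) (S.cross_finite 0 X)

/-- Sample times (midpoints between crossings). -/
def sm (i : ℕ) : ℝ := (S.tt i + S.tt (i + 1)) / 2

lemma sm_gt (i : ℕ) : S.tt i < S.sm i := by
  have := S.tt_lt_succ i
  rw [sm]; linarith

lemma sm_lt (i : ℕ) : S.sm i < S.tt (i + 1) := by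
  have := S.tt_lt_succ i
  rw [sm]; linarith

lemma sm_pos (i : ℕ) : 0 < S.sm i := lt_of_le_of_lt (S.tt_nonneg i) (S.sm_gt i)

lemma sm_not_cross (i : ℕ) : S.sm i ∉ S.Cross := S.tt_gap (S.sm_gt i) (S.sm_lt i)

/-- Sample points and crossing points on the ray. -/
def pt (i : ℕ) : V n := S.g (S.sm i)

def zc (i : ℕ) : V n := S.g (S.tt (i + 1))

lemma pt_offWall (i : ℕ) : offWall D (S.pt i) :=
  S.offWall_of_not_cross (S.sm_pos i) (S.sm_not_cross i)

/-- The crossing wall data at `tt (i+1)`, normalized so the root increases along the ray. -/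
lemma exists_bk (i : ℕ) : ∃ p : V n × ℤ, p.1 ∈ D.Φ ∧ 0 < ⟪p.1, S.dir⟫ ∧
    ⟪p.1, S.zc i⟫ = ((p.2 : ℤ) : ℝ) := by
  obtain ⟨ht0, α, hα, q, hq⟩ := S.tt_mem_cross i
  have he := S.cross_dir_ne hα hq
  rcases lt_or_gt_of_ne he with h | h
  · refine ⟨(-α, -q), D.neg_mem α hα, ?_, ?_⟩
    · rw [inner_neg_left]; linarith
    · show ⟪-α, S.g (S.tt (i+1))⟫ = ((-q : ℤ) : ℝ)
      rw [inner_neg_left, hq]; push_cast; ring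
  · exact ⟨(α, q), hα, h, hq⟩

def bk (i : ℕ) : V n × ℤ := (S.exists_bk i).choose

def bet (i : ℕ) : V n := (S.bk i).1

def ket (i : ℕ) : ℤ := (S.bk i).2

lemma bet_mem (i : ℕ) : S.bet i ∈ D.Φ := (S.exists_bk i).choose_spec.1

lemma bet_dir_pos (i : ℕ) : 0 < ⟪S.bet i, S.dir⟫ := (S.exists_bk i).choose_spec.2.1

lemma bet_val (i : ℕ) : ⟪S.bet i, S.zc i⟫ = ((S.ket i : ℤ) : ℝ) :=
  (S.exists_bk i).choose_spec.2.2

lemma bet_ne_zero (i : ℕ) : S.bet i ≠ 0 := D.nonzero _ (S.bet_mem i)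

lemma wall_eq (i : ℕ) {α : V n} (hα : α ∈ D.Φ) {q : ℤ}
    (hq : ⟪α, S.zc i⟫ = (q : ℝ)) :
    (α = S.bet i ∧ q = S.ket i) ∨ (α = -S.bet i ∧ q = -S.ket i) := by
  have h1 := S.bet_val i
  rw [zc, S.inner_g] at hq h1
  exact S.uniq (S.bet i) (S.bet_mem i) α hα (S.ket i) q (S.tt (i+1)) (S.tt_pos i) h1 hq

lemma offWall_at_cross (i : ℕ) {α : V n} (hα : α ∈ D.Φ) (h1 : α ≠ S.bet i)
    (h2 : α ≠ -S.bet i) : ∀ q : ℤ, ⟪α, S.zc i⟫ ≠ (q : ℝ) := by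
  intro q hq
  rcases S.wall_eq i hα hq with ⟨h, _⟩ | ⟨h, _⟩
  · exact h1 h
  · exact h2 h

/-- Floors at sample points. -/
def mf (i : ℕ) (α : V n) : ℤ := ⌊⟪α, S.pt i⟫⌋

lemma no_cross_val {t : ℝ} (hi : ∃ i : ℕ, S.tt i < t ∧ t < S.tt (i+1)) (α : V n)
    (hα : α ∈ D.Φ) (q : ℤ) : ⟪α, S.g t⟫ ≠ (q : ℝ) := by
  obtain ⟨i, h1, h2⟩ := hi
  have ht0 : 0 < t := lt_of_le_of_lt (S.tt_nonneg i) h1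
  exact fun hq => (S.tt_gap h1 h2) ⟨ht0, α, hα, q, hq⟩

lemma mf_eq_left (i : ℕ) {α : V n} (hα : α ∈ D.Φ) (h1 : α ≠ S.bet i)
    (h2 : α ≠ -S.bet i) : ⌊⟪α, S.zc i⟫⌋ = S.mf i α := by
  have key : ⌊⟪α, S.x0⟫ + S.sm i * ⟪α, S.dir⟫⌋ = ⌊⟪α, S.x0⟫ + S.tt (i+1) * ⟪α, S.dir⟫⌋ := by
    apply floor_const_of_no_int (le_of_lt (S.sm_lt i))
    intro s hs1 hs2 q
    rw [← S.inner_g]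
    rcases lt_or_eq_of_le hs2 with h | h
    · exact S.no_cross_val ⟨i, lt_of_lt_of_le (S.sm_gt i) hs1, h⟩ α hα q
    · rw [h]
      exact S.offWall_at_cross i hα h1 h2 q
  rw [mf, pt, zc, S.inner_g, S.inner_g, key]

lemma mf_eq_right (i : ℕ) {α : V n} (hα : α ∈ D.Φ) (h1 : α ≠ S.bet i)
    (h2 : α ≠ -S.bet i) : ⌊⟪α, S.zc i⟫⌋ = S.mf (i+1) α := by
  have key : ⌊⟪α, S.x0⟫ + S.tt (i+1) * ⟪α, S.dir⟫⌋ =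
      ⌊⟪α, S.x0⟫ + S.sm (i+1) * ⟪α, S.dir⟫⌋ := by
    apply floor_const_of_no_int (le_of_lt (S.sm_gt (i+1)))
    intro s hs1 hs2 q
    rw [← S.inner_g]
    rcases lt_or_eq_of_le hs1 with h | h
    · exact S.no_cross_val ⟨i+1, h, lt_of_le_of_lt hs2 (S.sm_lt (i+1))⟩ α hα q
    · rw [← h]
      exact S.offWall_at_cross i hα h1 h2 q
  rw [mf, pt, zc, S.inner_g, S.inner_g, key]

lemma bet_val_left (i : ℕ) :
    ((S.ket i : ℝ)) - 1 < ⟪S.bet i, S.pt i⟫ ∧ ⟪S.bet i, S.pt i⟫ < (S.ket i : ℝ) := by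
  have hcross : ⟪S.bet i, S.x0⟫ + S.tt (i+1) * ⟪S.bet i, S.dir⟫ = ((S.ket i : ℤ) : ℝ) := by
    rw [← S.inner_g]; exact S.bet_val i
  have := val_before_crossing (S.sm_lt i) (S.bet_dir_pos i) hcross ?_
  · rw [pt, S.inner_g]; exact this
  · intro s hs1 hs2 q'
    rw [← S.inner_g]
    exact S.no_cross_val ⟨i, lt_of_lt_of_le (S.sm_gt i) hs1, hs2⟩ _ (S.bet_mem i) q'

lemma bet_val_right (i : ℕ) :
    ((S.ket i : ℝ)) < ⟪S.bet i, S.pt (i+1)⟫ ∧ ⟪S.bet i, S.pt (i+1)⟫ < (S.ket i : ℝ) + 1 := by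
  have hcross : ⟪S.bet i, S.x0⟫ + S.tt (i+1) * ⟪S.bet i, S.dir⟫ = ((S.ket i : ℤ) : ℝ) := by
    rw [← S.inner_g]; exact S.bet_val i
  have := val_after_crossing (S.sm_gt (i+1)) (S.bet_dir_pos i) hcross ?_
  · rw [pt, S.inner_g]; exact this
  · intro s hs1 hs2 q'
    rw [← S.inner_g]
    exact S.no_cross_val ⟨i+1, hs1, lt_of_le_of_lt hs2 (S.sm_lt (i+1))⟩ _ (S.bet_mem i) q'

lemma mf_bet_left (i : ℕ) : S.mf i (S.bet i) = S.ket i - 1 :=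
  floor_of_Ioo (S.bet_val_left i).1 (S.bet_val_left i).2

lemma mf_bet_right (i : ℕ) : S.mf (i+1) (S.bet i) = S.ket i :=
  floor_of_Ioo' (S.bet_val_right i).1 (S.bet_val_right i).2

lemma mf_negbet_left (i : ℕ) : S.mf i (-S.bet i) = -S.ket i := by
  have h := S.bet_val_left i
  have : ⟪-S.bet i, S.pt i⟫ = -⟪S.bet i, S.pt i⟫ := inner_neg_left _ _
  rw [mf, this]
  apply floor_of_Ioo'
  · push_cast; linarith [h.2]
  · push_cast; linarith [h.1]

lemma mf_negbet_right (i : ℕ) : S.mf (i+1) (-S.bet i) = -S.ket i - 1 := by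
  have h := S.bet_val_right i
  have : ⟪-S.bet i, S.pt (i+1)⟫ = -⟪S.bet i, S.pt (i+1)⟫ := inner_neg_left _ _
  rw [mf, this]
  apply floor_of_Ioo
  · push_cast; linarith [h.2]
  · push_cast; linarith [h.1]

lemma val_zc_open (i : ℕ) {α : V n} (hα : α ∈ D.Φ) (h1 : α ≠ S.bet i) (h2 : α ≠ -S.bet i) :
    ((⌊⟪α, S.zc i⟫⌋ : ℝ) < ⟪α, S.zc i⟫ ∧ ⟪α, S.zc i⟫ < (⌊⟪α, S.zc i⟫⌋ : ℝ) + 1) := by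
  have hne := S.offWall_at_cross i hα h1 h2 ⌊⟪α, S.zc i⟫⌋
  exact ⟨lt_of_le_of_ne (Int.floor_le _) (Ne.symm hne), Int.lt_floor_add_one _⟩

end Setup

end

end SectorProof
namespace SectorProof

noncomputable section

open Filter Set Topology

variable {n : ℕ}

namespace Setup

variable {D : RootData n} (S : Setup D)

/-- The open alcove regions along the ray. -/
def Ri (i : ℕ) : Set (V n) := RB D (S.pt i)

/-- The alcoves along the ray. -/
def ci (i : ℕ) : Set (V n) := closure (connectedComponentIn (wallUnion D)ᶜ (S.pt i))

/-- The panel classes along the ray. -/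
def Fi (i : ℕ) : Set (V n) := cls D (S.zc i)

/-- The closed panels along the ray. -/
def pl (i : ℕ) : Set (V n) := closure (S.Fi i)

lemma ci_eq (i : ℕ) : S.ci i = closure (S.Ri i) := by
  rw [ci, Ri, connectedComponentIn_eq_RB D (S.pt_offWall i)]

lemma isAlcove_ci (i : ℕ) : IsAlcove D (S.ci i) :=
  ⟨S.pt i, (offWall_iff D _).2 (S.pt_offWall i), rfl⟩

lemma isFace_pl (i : ℕ) : IsFace D (S.pl i) := ⟨S.zc i, rfl⟩

lemma pt_mem_ci (i : ℕ) : S.pt i ∈ S.ci i := by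
  rw [ci_eq]
  exact subset_closure (mem_RB_self D (S.pt_offWall i))

lemma mem_Fi_iff (i : ℕ) (w : V n) : w ∈ S.Fi i ↔
    (⟪S.bet i, w⟫ = (S.ket i : ℝ) ∧ ∀ α ∈ D.Φ, α ≠ S.bet i → α ≠ -S.bet i →
      ((⌊⟪α, S.zc i⟫⌋ : ℝ) < ⟪α, w⟫ ∧ ⟪α, w⟫ < (⌊⟪α, S.zc i⟫⌋ : ℝ) + 1)) := by
  constructor
  · intro h
    constructor
    · exact (scalar_class_int (S.bet_val i)).1 (h (S.bet i) (S.bet_mem i))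
    · intro α hα h1 h2
      exact (scalar_class_iff (S.offWall_at_cross i hα h1 h2)).1 (h α hα)
  · rintro ⟨hb, ho⟩ α hα k
    by_cases h1 : α = S.bet i
    · subst h1
      exact (scalar_class_int (S.bet_val i)).2 hb k
    · by_cases h2 : α = -S.bet i
      · subst h2
        have ha : ⟪-S.bet i, S.zc i⟫ = ((-S.ket i : ℤ) : ℝ) := by
          rw [inner_neg_left, S.bet_val i]; push_cast; ring
        have hbneg : ⟪-S.bet i, w⟫ = ((-S.ket i : ℤ) : ℝ) := by
          rw [inner_neg_left, hb]; push_cast; ring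
        exact (scalar_class_int ha).2 hbneg k
      · exact (scalar_class_iff (S.offWall_at_cross i hα h1 h2)).2 (ho α hα h1 h2) k

lemma zc_mem_Fi (i : ℕ) : S.zc i ∈ S.Fi i := mem_cls_self D _

lemma Fi_sub_Hy (i : ℕ) : S.Fi i ⊆ Hy (S.bet i) (S.ket i : ℝ) := by
  intro w hw
  exact ((S.mem_Fi_iff i w).1 hw).1

lemma pl_sub_Hy (i : ℕ) : S.pl i ⊆ Hy (S.bet i) (S.ket i : ℝ) :=
  closure_minimal (S.Fi_sub_Hy i) (Hy_closed _ _)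

/-- Membership of panel points in the closed boxes on both sides. -/
lemma Fi_sub_RBcl (i j : ℕ) (hj : i = j ∨ i + 1 = j) : S.Fi i ⊆ RBcl D (S.pt j) := by
  intro w hw
  obtain ⟨hb, ho⟩ := (S.mem_Fi_iff i w).1 hw
  intro α hα
  by_cases h1 : α = S.bet i
  · subst h1
    rcases hj with h | h <;> subst h
    · rw [show ⌊⟪S.bet i, S.pt i⟫⌋ = S.mf i (S.bet i) from rfl, S.mf_bet_left i, hb]
      constructor <;> [push_cast; push_cast] <;> linarith
    · rw [show ⌊⟪S.bet i, S.pt (i+1)⟫⌋ = S.mf (i+1) (S.bet i) from rfl, S.mf_bet_right i, hb]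
      constructor <;> [push_cast; push_cast] <;> linarith
  · by_cases h2 : α = -S.bet i
    · subst h2
      have hbneg : ⟪-S.bet i, w⟫ = -(S.ket i : ℝ) := by rw [inner_neg_left, hb]
      rcases hj with h | h <;> subst h
      · rw [show ⌊⟪-S.bet i, S.pt i⟫⌋ = S.mf i (-S.bet i) from rfl, S.mf_negbet_left i, hbneg]
        constructor <;> [push_cast; push_cast] <;> linarith
      · rw [show ⌊⟪-S.bet i, S.pt (i+1)⟫⌋ = S.mf (i+1) (-S.bet i) from rfl,
          S.mf_negbet_right i, hbneg]
        constructor <;> [push_cast; push_cast] <;> linarith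
    · have hfl : ⌊⟪α, S.pt j⟫⌋ = ⌊⟪α, S.zc i⟫⌋ := by
        rcases hj with rfl | rfl
        · exact (S.mf_eq_left i hα h1 h2).symm
        · exact (S.mf_eq_right i hα h1 h2).symm
      obtain ⟨hlo, hhi⟩ := ho α hα h1 h2
      rw [hfl]
      exact ⟨le_of_lt hlo, le_of_lt hhi⟩

lemma Fi_sub_closure_Ri (i j : ℕ) (hj : i = j ∨ i + 1 = j) :
    S.Fi i ⊆ closure (S.Ri j) := by
  intro w hw
  exact mem_closure_RB D (S.pt_offWall j) (S.Fi_sub_RBcl i j hj hw)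

lemma pl_sub_ci (i j : ℕ) (hj : i = j ∨ i + 1 = j) : S.pl i ⊆ S.ci j := by
  rw [ci_eq]
  calc S.pl i ⊆ closure (closure (S.Ri j)) := closure_mono (S.Fi_sub_closure_Ri i j hj)
    _ = closure (S.Ri j) := closure_closure

/-- The key panel identity: `pl i = ci j ∩ H`. -/
lemma ci_inter_Hy_sub_pl (i j : ℕ) (hj : i = j ∨ i + 1 = j) :
    S.ci j ∩ Hy (S.bet i) (S.ket i : ℝ) ⊆ S.pl i := by
  rintro w ⟨hwc, hwH⟩
  rw [ci_eq] at hwc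
  have hbox := closure_RB_subset D (S.pt j) hwc
  rw [pl]
  apply mem_closure_of_tendsto (tendsto_seg w (S.zc i))
  have hall : ∀ α ∈ D.finite.toFinset, ∀ᶠ ε in 𝓝[>] (0:ℝ),
      (α ≠ S.bet i → α ≠ -S.bet i →
        ((⌊⟪α, S.zc i⟫⌋ : ℝ) < ⟪α, w + ε • (S.zc i - w)⟫ ∧
          ⟪α, w + ε • (S.zc i - w)⟫ < (⌊⟪α, S.zc i⟫⌋ : ℝ) + 1)) := by
    intro α hα'
    rw [Set.Finite.mem_toFinset] at hα'
    by_cases h1 : α = S.bet i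
    · filter_upwards with ε h _; exact absurd h1 h
    · by_cases h2 : α = -S.bet i
      · filter_upwards with ε _ h; exact absurd h2 h
      · have hfl : ⌊⟪α, S.pt j⟫⌋ = ⌊⟪α, S.zc i⟫⌋ := by
          rcases hj with rfl | rfl
          · exact (S.mf_eq_left i hα' h1 h2).symm
          · exact (S.mf_eq_right i hα' h1 h2).symm
        obtain ⟨hb1, hb2⟩ := hbox α hα'
        rw [hfl] at hb1 hb2
        have hstrict := S.val_zc_open i hα' h1 h2
        have := ev_seg hb1 hb2 hstrict.1 hstrict.2
        filter_upwards [this] with ε hε _ _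
        rw [inner_seg]
        exact hε
  have hev := (Filter.eventually_all_finset (D.finite.toFinset)).2 hall
  filter_upwards [hev] with ε hε
  rw [mem_Fi_iff]
  constructor
  · rw [inner_seg]
    have hz : ⟪S.bet i, S.zc i⟫ = (S.ket i : ℝ) := S.bet_val i
    have hwv : ⟪S.bet i, w⟫ = (S.ket i : ℝ) := hwH
    rw [hz, hwv]
    ring
  · intro α hα h1 h2
    exact hε α (D.finite.mem_toFinset.2 hα) h1 h2

lemma pl_eq (i j : ℕ) (hj : i = j ∨ i + 1 = j) :
    S.pl i = S.ci j ∩ Hy (S.bet i) (S.ket i : ℝ) :=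
  Set.Subset.antisymm
    (Set.subset_inter (S.pl_sub_ci i j hj) (S.pl_sub_Hy i))
    (S.ci_inter_Hy_sub_pl i j hj)

lemma zc_mem_pl (i : ℕ) : S.zc i ∈ S.pl i := subset_closure (S.zc_mem_Fi i)

/-- Uniqueness of the supporting hyperplane. -/
lemma unique_wall (i : ℕ) {α : V n} (hα : α ∈ D.Φ) {k' : ℤ}
    (hsub : S.pl i ⊆ Hy α (k' : ℝ)) : Hy α (k' : ℝ) = Hy (S.bet i) (S.ket i : ℝ) := by
  have hzα : ⟪α, S.zc i⟫ = (k' : ℝ) := hsub (S.zc_mem_pl i)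
  have hker : ∀ h : V n, ⟪S.bet i, h⟫ = 0 → ⟪α, h⟫ = 0 := by
    intro h hh
    have hev : ∀ᶠ ε in 𝓝[>] (0:ℝ), S.zc i + ε • h ∈ S.Fi i := by
      have hall : ∀ γ ∈ D.finite.toFinset, ∀ᶠ ε in 𝓝[>] (0:ℝ),
          (γ ≠ S.bet i → γ ≠ -S.bet i →
            ((⌊⟪γ, S.zc i⟫⌋ : ℝ) < ⟪γ, S.zc i + ε • h⟫ ∧
              ⟪γ, S.zc i + ε • h⟫ < (⌊⟪γ, S.zc i⟫⌋ : ℝ) + 1)) := by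
        intro γ hγ
        rw [Set.Finite.mem_toFinset] at hγ
        by_cases h1 : γ = S.bet i
        · filter_upwards with ε hcon _; exact absurd h1 hcon
        · by_cases h2 : γ = -S.bet i
          · filter_upwards with ε _ hcon; exact absurd h2 hcon
          · have hstrict := S.val_zc_open i hγ h1 h2
            have := ev_lin hstrict.1 hstrict.2 (c := ⟪γ, h⟫)
            filter_upwards [this] with ε hε _ _
            rw [inner_add_right, real_inner_smul_right]
            exact hε
      have hev2 := (Filter.eventually_all_finset (D.finite.toFinset)).2 hall
      filter_upwards [hev2] with ε hε
      rw [mem_Fi_iff]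
      constructor
      · rw [inner_add_right, real_inner_smul_right, hh, mul_zero, add_zero]
        exact S.bet_val i
      · intro γ hγ h1 h2
        exact hε γ (D.finite.mem_toFinset.2 hγ) h1 h2
    obtain ⟨ε, hεF, hεpos⟩ := (hev.and eventually_pos).exists
    have : ⟪α, S.zc i + ε • h⟫ = (k' : ℝ) := hsub (subset_closure hεF)
    rw [inner_add_right, real_inner_smul_right, hzα] at this
    have hεh : ε * ⟪α, h⟫ = 0 := by linarith
    rcases mul_eq_zero.1 hεh with h | h
    · exact absurd h (ne_of_gt hεpos)
    · exact h
  obtain ⟨c, hc⟩ := parallel_of_ker_le (S.bet_ne_zero i) hker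
  have hc0 : c ≠ 0 := by
    intro h
    rw [h, zero_smul] at hc
    exact D.nonzero α hα hc
  have hk' : (k' : ℝ) = c * (S.ket i : ℝ) := by
    rw [← hzα, hc, real_inner_smul_left, S.bet_val i]
  rw [hc, hk']
  exact Hy_eq_of_parallel hc0

lemma Hy_mem_hyperplanes (i : ℕ) : Hy (S.bet i) (S.ket i : ℝ) ∈ hyperplanes D :=
  ⟨S.bet i, S.bet_mem i, S.ket i, rfl⟩

lemma isPanel (i j : ℕ) (hj : i = j ∨ i + 1 = j) : IsPanelOf D (S.pl i) (S.ci j) := by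
  refine ⟨S.isAlcove_ci j, S.isFace_pl i, ⟨Hy (S.bet i) (S.ket i : ℝ),
    S.Hy_mem_hyperplanes i, S.pl_eq i j hj⟩, ?_⟩
  refine ⟨Hy (S.bet i) (S.ket i : ℝ), ⟨S.Hy_mem_hyperplanes i, S.pl_sub_Hy i⟩, ?_⟩
  rintro H' ⟨⟨α, hα, k', rfl⟩, hsub⟩
  exact S.unique_wall i hα hsub

/-- Alcoves are contained in closed boxes around the sample points. -/
lemma ci_sub_RBcl (i : ℕ) : S.ci i ⊆ RBcl D (S.pt i) := by
  rw [ci_eq]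
  exact closure_RB_subset D (S.pt i)

end Setup

end

end SectorProof
namespace SectorProof

noncomputable section

open Filter Set Topology

variable {n : ℕ}

namespace Setup

variable {D : RootData n} (S : Setup D)

/-- The infinite gallery along the ray. -/
def gal : InfPreGallery n :=
  ⟨fun i => Nat.rec (S.ci 0) (fun j _ => S.pl j) i, fun i => S.ci i⟩

lemma gal_p_zero : S.gal.p 0 = S.ci 0 := rfl

lemma gal_p_succ (i : ℕ) : S.gal.p (i + 1) = S.pl i := rfl

lemma gal_c (i : ℕ) : S.gal.c i = S.ci i := rfl

lemma isFace_ci (i : ℕ) : IsFace D (S.ci i) := by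
  have h : S.ci i = closure (cls D (S.pt i)) := by
    rw [ci, connectedComponentIn_eq_RB D (S.pt_offWall i), cls_eq_RB D (S.pt_offWall i)]
  exact ⟨S.pt i, h⟩

lemma gal_panels {i : ℕ} (hi : 1 ≤ i) :
    IsPanelOf D (S.gal.p i) (S.gal.c (i - 1)) ∧ IsPanelOf D (S.gal.p i) (S.gal.c i) := by
  obtain ⟨j, rfl⟩ : ∃ j, i = j + 1 := ⟨i - 1, by omega⟩
  rw [gal_p_succ]
  constructor
  · rw [show j + 1 - 1 = j from rfl, gal_c]
    exact S.isPanel j j (Or.inl rfl)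
  · rw [gal_c]
    exact S.isPanel j (j + 1) (Or.inr rfl)

lemma isInfGallery_gal : IsInfGallery D S.gal := by
  refine ⟨fun i => S.isAlcove_ci i, ?_, ?_, fun i hi => S.gal_panels hi⟩
  · rw [gal_p_zero]; exact S.isFace_ci 0
  · rw [gal_p_zero, gal_c]

/-- Monotonicity of values along the ray. -/
lemma val_g_lt (j : ℕ) {t : ℝ} (ht : t < S.tt (j + 1)) :
    ⟪S.bet j, S.g t⟫ < (S.ket j : ℝ) := by
  have hv := S.bet_val j
  rw [zc, S.inner_g] at hv
  rw [S.inner_g]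
  nlinarith [mul_lt_mul_of_pos_right ht (S.bet_dir_pos j)]

lemma val_g_gt (j : ℕ) {t : ℝ} (ht : S.tt (j + 1) < t) :
    (S.ket j : ℝ) < ⟪S.bet j, S.g t⟫ := by
  have hv := S.bet_val j
  rw [zc, S.inner_g] at hv
  rw [S.inner_g]
  nlinarith [mul_lt_mul_of_pos_right ht (S.bet_dir_pos j)]

/-- Distinct crossings have distinct walls. -/
lemma wall_ne {j j' : ℕ} (hjj : j ≠ j') :
    Hy (S.bet j) (S.ket j : ℝ) ≠ Hy (S.bet j') (S.ket j' : ℝ) := by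
  intro heq
  obtain ⟨c, hc0, hcb, hck⟩ := Hy_eq_iff (S.bet_ne_zero j) (S.bet_ne_zero j') heq
  have hcΦ : c • S.bet j ∈ D.Φ := by rw [← hcb]; exact S.bet_mem j'
  rcases D.reduced (S.bet j) (S.bet_mem j) c hcΦ with hc1 | hc1
  · rw [hc1, one_smul] at hcb
    rw [hc1, one_mul] at hck
    have hketeq : S.ket j' = S.ket j := by exact_mod_cast hck
    have hv := S.bet_val j
    have hv' := S.bet_val j'
    rw [← hcb, ← hketeq] at hv
    rw [zc, S.inner_g] at hv hv'
    have he := S.bet_dir_pos j'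
    have : S.tt (j + 1) = S.tt (j' + 1) := by
      by_contra hne
      rcases lt_or_gt_of_ne hne with h | h
      · nlinarith [mul_lt_mul_of_pos_right h he]
      · nlinarith [mul_lt_mul_of_pos_right h he]
    have := S.tt_strictMono.injective this
    omega
  · have h1 := S.bet_dir_pos j'
    rw [hcb, hc1, real_inner_smul_left] at h1
    have h2 := S.bet_dir_pos j
    nlinarith

lemma panel_sub {p c : Set (V n)} (h : IsPanelOf D p c) : p ⊆ c := by
  obtain ⟨_, _, ⟨H, _, rfl⟩, _⟩ := h
  exact Set.inter_subset_left

/-- Minimality of every truncation of the gallery. -/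
lemma gal_minimal (m : ℕ) : IsMinimal D (truncGallery S.gal m) := by
  constructor
  · -- the truncation is a gallery
    refine ⟨fun i _ => S.isAlcove_ci i, ⟨S.isFace_ci 0, subset_rfl⟩, ⟨?_, ?_⟩, ?_⟩
    · show IsFace D (S.gal.p (m + 1))
      rw [gal_p_succ]
      exact S.isFace_pl m
    · show S.gal.p (m + 1) ⊆ S.gal.c m
      rw [gal_p_succ, gal_c]
      exact S.pl_sub_ci m m (Or.inl rfl)
    · intro i hi _
      exact S.gal_panels hi
  · intro γ' hγ' hp0 hpl
    show m ≤ γ'.len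
    obtain ⟨halc, ⟨hface0, hsub0⟩, ⟨hfaceL, hsubL⟩, hpanels⟩ := hγ'
    set l := γ'.len with hl
    have hp0' : γ'.p 0 = S.ci 0 := hp0
    have hpl' : γ'.p (l + 1) = S.pl m := hpl
    have hx0mem : S.pt 0 ∈ γ'.c 0 := hsub0 (by rw [hp0']; exact S.pt_mem_ci 0)
    have hzmem : S.zc m ∈ γ'.c l := hsubL (by rw [hpl']; exact S.zc_mem_pl m)
    have hxval : ∀ j, j < m → ⟪S.bet j, S.pt 0⟫ < (S.ket j : ℝ) := by
      intro j hj
      apply S.val_g_lt j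
      calc S.sm 0 < S.tt 1 := S.sm_lt 0
        _ ≤ S.tt (j + 1) := S.tt_strictMono.le_iff_le.2 (by omega)
    have hzval : ∀ j, j < m → (S.ket j : ℝ) < ⟪S.bet j, S.zc m⟫ := by
      intro j hj
      apply S.val_g_gt j
      exact S.tt_strictMono (by omega)
    have key : ∀ j, j < m → ∃ i, 1 ≤ i ∧ i ≤ l ∧ γ'.p i ⊆ Hy (S.bet j) (S.ket j : ℝ) := by
      intro j hj
      set W := {i : ℕ | i ≤ l ∧ γ'.c i ⊆ Hge (S.bet j) (S.ket j : ℝ)} with hW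
      have hWne : l ∈ W := by
        refine ⟨le_rfl, ?_⟩
        rcases alcove_side D (halc l le_rfl) (S.bet_mem j) (S.ket j) with h | h
        · exact h
        · exfalso
          have := h hzmem
          have h2 := hzval j hj
          exact absurd this (not_le.2 h2)
      set i0 := sInf W with hi0def
      have hi0 : i0 ∈ W := Nat.sInf_mem ⟨l, hWne⟩
      have hi0ne : i0 ≠ 0 := by
        intro h
        rw [h] at hi0
        have := hi0.2 hx0mem
        exact absurd this (not_le.2 (hxval j hj))
      have hi0le : i0 ≤ l := hi0.1
      have hi0pos : 1 ≤ i0 := Nat.one_le_iff_ne_zero.2 hi0ne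
      have hprev : i0 - 1 ∉ W := Nat.notMem_of_lt_sInf (by omega)
      have hprevHle : γ'.c (i0 - 1) ⊆ Hle (S.bet j) (S.ket j : ℝ) := by
        rcases alcove_side D (halc (i0 - 1) (by omega)) (S.bet_mem j) (S.ket j) with h | h
        · exact absurd ⟨by omega, h⟩ hprev
        · exact h
      obtain ⟨hpan1, hpan2⟩ := hpanels i0 (by omega) (by omega)
      refine ⟨i0, by omega, by omega, ?_⟩
      intro x hx
      have h1 := hprevHle (panel_sub hpan1 hx)
      have h2 := hi0.2 (panel_sub hpan2 hx)
      exact le_antisymm h1 h2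
    -- injectivity via uniqueness of supporting hyperplanes
    choose f hf1 hf2 hf3 using key
    have hinj : ∀ j hj j' hj', f j hj = f j' hj' → j = j' := by
      intro j hj j' hj' heq
      by_contra hne
      obtain ⟨_, hpan2⟩ := hpanels (f j hj) (hf1 j hj) (hf2 j hj)
      obtain ⟨_, _, _, H, hH, huniq⟩ := hpan2
      have e1 : Hy (S.bet j) (S.ket j : ℝ) = H :=
        huniq _ ⟨⟨S.bet j, S.bet_mem j, S.ket j, rfl⟩, hf3 j hj⟩
      have e2 : Hy (S.bet j') (S.ket j' : ℝ) = H := by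
        apply huniq
        refine ⟨⟨S.bet j', S.bet_mem j', S.ket j', rfl⟩, ?_⟩
        rw [heq]
        exact hf3 j' hj'
      exact S.wall_ne hne (e1.trans e2.symm)
    -- cardinality
    classical
    have hcard : (Finset.range m).card ≤ (Finset.Icc 1 l).card := by
      apply Finset.card_le_card_of_injOn
        (fun j => if hj : j < m then f j hj else 0)
      · intro j hjm
        rw [Finset.mem_coe, Finset.mem_range] at hjm
        simp only [dif_pos hjm]
        exact Finset.mem_coe.2 (Finset.mem_Icc.2 ⟨hf1 j hjm, hf2 j hjm⟩)
      · intro j hj j' hj' heq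
        rw [Finset.mem_coe, Finset.mem_range] at hj hj'
        dsimp only at heq
        rw [dif_pos hj, dif_pos hj'] at heq
        exact hinj j hj j' hj' heq
    rw [Finset.card_range, Nat.card_Icc] at hcard
    omega

lemma infMinimal_gal : InfMinimal D S.gal := fun m => S.gal_minimal m

lemma sm_unbounded (X : ℝ) : ∃ i, X < S.sm i := by
  obtain ⟨i, hi⟩ := S.tt_unbounded X
  exact ⟨i, lt_trans hi (S.sm_gt i)⟩

lemma gal_c_sub_box (i : ℕ) : S.gal.c i ⊆ RBcl D (S.pt i) := S.ci_sub_RBcl i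

end Setup

end

end SectorProof
namespace SectorProof

noncomputable section

open Filter Set Topology MeasureTheory

variable {n : ℕ}

/-! ### The dominant chamber and `halfFor` computations -/

theorem _root_.Equiv.Perm.apply_inv_self {α : Type*} (f : Equiv.Perm α) (x : α) :
    f (f⁻¹ x) = x := Equiv.apply_symm_apply f x

theorem _root_.Equiv.Perm.inv_apply_self {α : Type*} (f : Equiv.Perm α) (x : α) :
    f⁻¹ (f x) = x := Equiv.symm_apply_apply f x

lemma span_simple_top (D : RootData n) :
    Submodule.span ℝ (Set.range D.simple) = ⊤ := by
  apply Submodule.eq_top_of_finrank_eq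
  rw [finrank_span_eq_card D.simple_indep]
  simp [finrank_euclideanSpace_fin]

lemma dual_mem_Cf (D : RootData n) {f : Fin n → V n}
    (hf : ∀ i j : Fin n, ⟪D.simple j, f i⟫ = if i = j then 1 else 0) (i : Fin n) :
    f i ∈ Cf D := by
  intro α hα
  obtain ⟨c, hc0, hcsum⟩ := D.pos_combo α hα
  rw [hcsum, sum_inner]
  apply Finset.sum_nonneg
  intro j _
  rw [real_inner_smul_left, hf]
  rcases eq_or_ne i j with h | h
  · simp [h]; exact hc0 j
  · simp [h]

lemma eq_zero_of_inner_dual_zero (D : RootData n) {f : Fin n → V n}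
    (hf : ∀ i j : Fin n, ⟪D.simple j, f i⟫ = if i = j then 1 else 0) {ζ : V n}
    (hζ : ∀ i, ⟪ζ, f i⟫ = 0) : ζ = 0 := by
  have hmem : ζ ∈ Submodule.span ℝ (Set.range D.simple) := by
    rw [span_simple_top]; trivial
  obtain ⟨r, hr⟩ := (Submodule.mem_span_range_iff_exists_fun ℝ).1 hmem
  have hri : ∀ i, r i = 0 := by
    intro i
    have := hζ i
    rw [← hr, sum_inner] at this
    have heq : ∀ j ∈ Finset.univ, ⟪r j • D.simple j, f i⟫ =
        if i = j then r j else 0 := by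
      intro j _
      rw [real_inner_smul_left, hf]
      rcases eq_or_ne i j with h | h
      · simp [h]
      · simp [h]
    rw [Finset.sum_congr rfl heq, Finset.sum_ite_eq] at this
    simpa using this
  rw [← hr]
  apply Finset.sum_eq_zero
  intro i _
  rw [hri i, zero_smul]

lemma exists_cf_neg (D : RootData n) {w0 : Equiv.Perm (V n)} (hw0 : IsLongest D w0)
    {β : V n} (hβ : β ∈ D.pos) : ∃ v ∈ Cf D, ⟪β, w0 v⟫ < 0 := by
  by_contra hcon
  push_neg at hcon
  have hle : ∀ v ∈ Cf D, ⟪β, w0 v⟫ ≤ 0 := by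
    intro v hv
    have himg : w0 v ∈ ⇑w0 '' Cf D := ⟨v, hv, rfl⟩
    rw [hw0.2] at himg
    have h2 := himg β hβ
    rw [inner_neg_right] at h2
    linarith
  obtain ⟨f, hf⟩ := exists_dual_family D
  have hzero : ∀ i, ⟪β, w0 (f i)⟫ = 0 := fun i =>
    le_antisymm (hle _ (dual_mem_Cf D hf i)) (hcon _ (dual_mem_Cf D hf i))
  have hnice := nice_of_mem_FinW D hw0.1
  have hζ : ∀ i, ⟪w0⁻¹ β, f i⟫ = 0 := by
    intro i
    have := hzero i
    rwa [hnice.inner_apply_right β (f i)] at this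
  have hz := eq_zero_of_inner_dual_zero D hf hζ
  have : β = 0 := by
    have := congrArg (⇑w0) hz
    rw [Equiv.Perm.apply_inv_self, hnice.map_zero] at this
    exact this
  exact D.nonzero β (D.pos_sub hβ) this

lemma halfFor_pos_one (D : RootData n) {α : V n} (hα : α ∈ D.pos) (k : ℝ) :
    halfFor D α k 1 = Hge α k := by
  rw [halfFor, if_pos]
  intro v hv
  exact hv α hα

lemma halfFor_w0 (D : RootData n) {w0 : Equiv.Perm (V n)} (hw0 : IsLongest D w0)
    {β : V n} (hβ : β ∈ D.pos) (k : ℝ) : halfFor D β k w0 = Hle β k := by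
  rw [halfFor, if_neg]
  intro hall
  obtain ⟨v, hv, hneg⟩ := exists_cf_neg D hw0 hβ
  exact absurd (hall v hv) (not_le.2 hneg)

lemma halfFor_u_w0 (D : RootData n) {w0 u : Equiv.Perm (V n)} (hw0 : IsLongest D w0)
    (hu : Nice D u) {β : V n} (hβ : β ∈ D.pos) (k : ℝ) :
    halfFor D (u β) k (u * w0) = Hle (u β) k := by
  rw [halfFor, if_neg]
  intro hall
  obtain ⟨v, hv, hneg⟩ := exists_cf_neg D hw0 hβ
  have := hall v hv
  rw [Equiv.Perm.mul_apply, hu.1] at this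
  exact absurd this (not_le.2 hneg)

/-! ### Construction of the base point and direction -/

lemma PhiJpos_sub_pos (D : RootData n) (J : Set (Fin n)) : PhiJpos D J ⊆ D.pos :=
  Set.inter_subset_left

lemma coeff_eq_inner {D : RootData n} {f : Fin n → V n}
    (hf : ∀ i j : Fin n, ⟪D.simple j, f i⟫ = if i = j then 1 else 0)
    {α : V n} {c : Fin n → ℝ} (hcsum : α = ∑ j, c j • D.simple j) (i : Fin n) :
    ⟪α, f i⟫ = c i := by
  rw [hcsum, sum_inner]
  have heq : ∀ j ∈ Finset.univ, ⟪c j • D.simple j, f i⟫ = if i = j then c j else 0 := by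
    intro j _
    rw [real_inner_smul_left, hf]
    rcases eq_or_ne i j with h | h <;> simp [h]
  rw [Finset.sum_congr rfl heq, Finset.sum_ite_eq]
  simp

lemma coeff_support {D : RootData n} {J : Set (Fin n)} {α : V n} {c : Fin n → ℝ}
    (hcsum : α = ∑ j, c j • D.simple j)
    (hspan : α ∈ Submodule.span ℝ (D.simple '' J)) {i : Fin n} (hi : i ∉ J) :
    c i = 0 := by
  classical
  have hn : 0 < n := by
    rcases Nat.eq_zero_or_pos n with h | h
    · exact absurd i.isLt (by omega)
    · exact h
  haveI : Nonempty (Fin n) := ⟨⟨0, hn⟩⟩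
  set bS : Module.Basis (Fin n) ℝ (V n) :=
    basisOfLinearIndependentOfCardEqFinrank D.simple_indep
      (by simp [finrank_euclideanSpace_fin]) with hbS
  have hcoe : ⇑bS = D.simple := coe_basisOfLinearIndependentOfCardEqFinrank _ _
  have hspan' : α ∈ Submodule.span ℝ (⇑bS '' J) := by rwa [hcoe]
  have hsupp := (bS.mem_span_image).1 hspan'
  have hrepr : ⇑(bS.repr α) = c := by
    rw [hcsum]
    have : ∑ j, c j • D.simple j = ∑ j, c j • bS j := by rw [hcoe]
    rw [this, Module.Basis.repr_sum_self]
  have hzero : (bS.repr α) i = 0 := by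
    by_contra hne
    exact hi (hsupp (Finsupp.mem_support_iff.2 hne))
  rw [show c = ⇑(bS.repr α) from hrepr.symm]
  exact hzero

lemma mem_span_image_of_support {D : RootData n} {J : Set (Fin n)} {c : Fin n → ℝ}
    (hsupp : ∀ i, i ∉ J → c i = 0) :
    ∑ j, c j • D.simple j ∈ Submodule.span ℝ (D.simple '' J) := by
  apply Submodule.sum_mem
  intro j _
  by_cases hj : j ∈ J
  · exact Submodule.smul_mem _ _ (Submodule.subset_span ⟨j, hj, rfl⟩)
  · rw [hsupp j hj, zero_smul]
    exact Submodule.zero_mem _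

/-- Existence of base point `b` and direction `dv` adapted to the sector. -/
lemma exists_base (D : RootData n) (J : Set (Fin n)) (nb : V n → ℤ) :
    ∃ b dv : V n,
      (∀ α ∈ PhiJpos D J, ⟪α, dv⟫ = 0 ∧ 0 < ⟪α, b⟫ ∧ ⟪α, b⟫ < 1) ∧
      (∀ β ∈ D.pos \ PhiJpos D J, ⟪β, dv⟫ < 0 ∧ ⟪β, b⟫ < (nb β : ℝ)) := by
  classical
  obtain ⟨f, hf⟩ := exists_dual_family D
  set dv : V n := ∑ i, (if i ∈ J then (0:ℝ) else -1) • f i with hdv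
  set fJ : V n := ∑ i, (if i ∈ J then (1:ℝ) else 0) • f i with hfJ
  -- inner products with roots
  have hdvα : ∀ (α : V n) (c : Fin n → ℝ), α = ∑ j, c j • D.simple j →
      ⟪α, dv⟫ = ∑ i, (if i ∈ J then (0:ℝ) else -1) * c i := by
    intro α c hc
    rw [hdv, inner_sum]
    congr 1; ext i
    rw [real_inner_smul_right, coeff_eq_inner hf hc i]
  have hfJα : ∀ (α : V n) (c : Fin n → ℝ), α = ∑ j, c j • D.simple j →
      ⟪α, fJ⟫ = ∑ i, (if i ∈ J then (1:ℝ) else 0) * c i := by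
    intro α c hc
    rw [hfJ, inner_sum]
    congr 1; ext i
    rw [real_inner_smul_right, coeff_eq_inner hf hc i]
  -- choose coefficients for each positive root
  -- properties on PhiJpos
  have hJprop : ∀ α ∈ PhiJpos D J, ⟪α, dv⟫ = 0 ∧ 0 < ⟪α, fJ⟫ := by
    intro α hα
    have hαpos : α ∈ D.pos := hα.1
    have hαΦ : α ∈ D.Φ := hα.2.1
    have hαspan : α ∈ Submodule.span ℝ (D.simple '' J) := hα.2.2
    obtain ⟨c, hc0, hcsum⟩ := D.pos_combo α hαpos
    have hsupp : ∀ i, i ∉ J → c i = 0 := fun i hi => coeff_support hcsum hαspan hi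
    constructor
    · rw [hdvα α c hcsum]
      apply Finset.sum_eq_zero
      intro i _
      by_cases hi : i ∈ J
      · simp [hi]
      · rw [hsupp i hi, mul_zero]
    · rw [hfJα α c hcsum]
      have hterms : ∀ i ∈ Finset.univ, 0 ≤ (if i ∈ J then (1:ℝ) else 0) * c i := by
        intro i _
        by_cases hi : i ∈ J <;> simp [hi, hc0 i]
      have hsum_nonneg : 0 ≤ ∑ i, (if i ∈ J then (1:ℝ) else 0) * c i :=
        Finset.sum_nonneg hterms
      rcases lt_or_eq_of_le hsum_nonneg with h | h
      · exact h
      · exfalso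
        have hall := (Finset.sum_eq_zero_iff_of_nonneg hterms).1 h.symm
        have hall0 : ∀ i, c i = 0 := by
          intro i
          by_cases hi : i ∈ J
          · have := hall i (Finset.mem_univ i)
            rw [if_pos hi, one_mul] at this
            exact this
          · exact hsupp i hi
        have : α = 0 := by
          rw [hcsum]
          apply Finset.sum_eq_zero
          intro i _
          rw [hall0 i, zero_smul]
        exact D.nonzero α hαΦ this
  have hBprop : ∀ β ∈ D.pos \ PhiJpos D J, ⟪β, dv⟫ < 0 := by
    intro β hβ
    obtain ⟨hβpos, hβnJ⟩ := hβ
    obtain ⟨c, hc0, hcsum⟩ := D.pos_combo β hβpos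
    rw [hdvα β c hcsum]
    have hle : ∀ i ∈ Finset.univ, (if i ∈ J then (0:ℝ) else -1) * c i ≤ 0 := by
      intro i _
      by_cases hi : i ∈ J
      · simp [hi]
      · simp [hi]
        exact hc0 i
    have hsum_le : (∑ i, (if i ∈ J then (0:ℝ) else -1) * c i) ≤ 0 :=
      Finset.sum_nonpos hle
    rcases lt_or_eq_of_le hsum_le with h | h
    · exact h
    · exfalso
      -- sum = 0 forces support ⊆ J, hence β ∈ PhiJpos
      have hall : ∀ i ∈ Finset.univ, (if i ∈ J then (0:ℝ) else -1) * c i = 0 := by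
        intro i hi
        have := (Finset.sum_eq_zero_iff_of_nonpos hle).1 h
        exact this i hi
      have hsupp : ∀ i, i ∉ J → c i = 0 := by
        intro i hi
        have := hall i (Finset.mem_univ i)
        rw [if_neg hi] at this
        linarith
      apply hβnJ
      refine ⟨hβpos, D.pos_sub hβpos, ?_⟩
      rw [hcsum]
      exact mem_span_image_of_support hsupp
  -- choose ε
  set Φf := D.finite.toFinset with hΦf
  set NR : ℕ := Φf.sup (fun γ => ⌈‖γ‖ * ‖fJ‖⌉₊) with hNR
  set ε : ℝ := 1 / (NR + 1) with hε
  have hεpos : 0 < ε := by positivity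
  have hεbound : ∀ α ∈ D.Φ, ε * ⟪α, fJ⟫ < 1 := by
    intro α hα
    have h1 : ⟪α, fJ⟫ ≤ ‖α‖ * ‖fJ‖ := real_inner_le_norm α fJ
    have h2 : ‖α‖ * ‖fJ‖ ≤ (NR : ℝ) := by
      calc ‖α‖ * ‖fJ‖ ≤ (⌈‖α‖ * ‖fJ‖⌉₊ : ℝ) := Nat.le_ceil _
        _ ≤ (NR : ℝ) := by
            exact_mod_cast Finset.le_sup (f := fun γ => ⌈‖γ‖ * ‖fJ‖⌉₊)
              (D.finite.mem_toFinset.2 hα)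
    have h3 : ⟪α, fJ⟫ < (NR : ℝ) + 1 := by linarith
    rcases le_or_gt (⟪α, fJ⟫) 0 with h | h
    · have h4 : ε * ⟪α, fJ⟫ ≤ 0 := mul_nonpos_of_nonneg_of_nonpos (le_of_lt hεpos) h
      linarith
    · rw [hε, div_mul_eq_mul_div, one_mul, div_lt_one (by positivity)]
      exact h3
  -- choose T
  set Tn : ℕ := Φf.sup (fun β => if β ∈ D.pos \ PhiJpos D J then
    ⌈((nb β : ℝ) - ε * ⟪β, fJ⟫) / ⟪β, dv⟫⌉₊ else 0) with hTn
  set T : ℝ := (Tn : ℝ) + 1 with hT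
  have hTprop : ∀ β ∈ D.pos \ PhiJpos D J, ε * ⟪β, fJ⟫ + T * ⟪β, dv⟫ < (nb β : ℝ) := by
    intro β hβ
    have hdvneg := hBprop β hβ
    set Tβ := ((nb β : ℝ) - ε * ⟪β, fJ⟫) / ⟪β, dv⟫ with hTβ
    have hTβle : Tβ ≤ (Tn : ℝ) := by
      calc Tβ ≤ (⌈Tβ⌉₊ : ℝ) := Nat.le_ceil _
        _ ≤ (Tn : ℝ) := by
            have : (⌈Tβ⌉₊ : ℕ) ≤ Tn := by
              have hmem : β ∈ Φf := D.finite.mem_toFinset.2 (D.pos_sub hβ.1)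
              have := Finset.le_sup (f := fun β => if β ∈ D.pos \ PhiJpos D J then
                ⌈((nb β : ℝ) - ε * ⟪β, fJ⟫) / ⟪β, dv⟫⌉₊ else 0) hmem
              simp only [if_pos hβ] at this
              exact this
            exact_mod_cast this
    have hTβlt : Tβ < T := by rw [hT]; linarith
    have := mul_lt_mul_of_neg_right hTβlt hdvneg
    have hTβmul : Tβ * ⟪β, dv⟫ = (nb β : ℝ) - ε * ⟪β, fJ⟫ :=
      div_mul_cancel₀ _ (ne_of_lt hdvneg)
    rw [hTβmul] at this
    linarith
  refine ⟨ε • fJ + T • dv, dv, ?_, ?_⟩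
  · intro α hα
    obtain ⟨hdv0, hfJpos⟩ := hJprop α hα
    have hb : ⟪α, ε • fJ + T • dv⟫ = ε * ⟪α, fJ⟫ + T * ⟪α, dv⟫ := by
      rw [inner_add_right, real_inner_smul_right, real_inner_smul_right]
    refine ⟨hdv0, ?_, ?_⟩
    · rw [hb, hdv0, mul_zero, add_zero]; exact mul_pos hεpos hfJpos
    · rw [hb, hdv0, mul_zero, add_zero]; exact hεbound α hα.2.1
  · intro β hβ
    have hb : ⟪β, ε • fJ + T • dv⟫ = ε * ⟪β, fJ⟫ + T * ⟪β, dv⟫ := by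
      rw [inner_add_right, real_inner_smul_right, real_inner_smul_right]
    rw [hb]
    exact ⟨hBprop β hβ, hTprop β hβ⟩

end

end SectorProof
namespace SectorProof

noncomputable section

open Filter Set Topology MeasureTheory

variable {n : ℕ}

set_option maxHeartbeats 1000000 in
lemma exists_generic (D : RootData n) (J : Set (Fin n)) (nb : V n → ℤ) :
    ∃ x dv : V n,
      (∀ α ∈ PhiJpos D J, ⟪α, dv⟫ = 0 ∧ 0 < ⟪α, x⟫ ∧ ⟪α, x⟫ < 1) ∧
      (∀ β ∈ D.pos \ PhiJpos D J, ⟪β, dv⟫ < 0 ∧ ⟪β, x⟫ < (nb β : ℝ)) ∧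
      (∀ γ ∈ D.Φ, ∀ q : ℤ, ⟪γ, x⟫ ≠ (q : ℝ)) ∧
      (∀ γ ∈ D.Φ, ∀ γ' ∈ D.Φ, ∀ q q' : ℤ, ⟪γ, dv⟫ ≠ 0 → ⟪γ', dv⟫ ≠ 0 →
        (¬∃ c : ℝ, γ' = c • γ) →
        ⟪γ', dv⟫ * ((q : ℝ) - ⟪γ, x⟫) ≠ ⟪γ, dv⟫ * ((q' : ℝ) - ⟪γ', x⟫)) := by
  classical
  obtain ⟨b, dv, hJ, hB⟩ := exists_base D J nb
  -- choose a generic direction w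
  set Pair : Set (V n) :=
    {v | v ≠ 0 ∧ ∃ γ ∈ D.Φ, ∃ γ' ∈ D.Φ, v = ⟪γ', dv⟫ • γ - ⟪γ, dv⟫ • γ'} with hPair
  have hPairfin : Pair.Finite := by
    apply Set.Finite.subset ((D.finite.prod D.finite).image
      (fun p : V n × V n => ⟪p.2, dv⟫ • p.1 - ⟪p.1, dv⟫ • p.2))
    rintro v ⟨hv0, γ, hγ, γ', hγ', rfl⟩
    exact ⟨(γ, γ'), ⟨hγ, hγ'⟩, rfl⟩
  have hVSfin : (D.Φ ∪ Pair).Finite := D.finite.union hPairfin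
  have hVS0 : ∀ v ∈ D.Φ ∪ Pair, v ≠ 0 := by
    rintro v (hv | hv)
    · exact D.nonzero v hv
    · exact hv.1
  obtain ⟨w, hw⟩ := exists_inner_ne_zero hVSfin hVS0
  have hwΦ : ∀ γ ∈ D.Φ, ⟪γ, w⟫ ≠ 0 := fun γ h => hw γ (Or.inl h)
  have hlin : ∀ (γ : V n) (s : ℝ), ⟪γ, b + s • w⟫ = ⟪γ, b⟫ + s * ⟪γ, w⟫ := by
    intro γ s
    rw [inner_add_right, real_inner_smul_right]
  -- the bad set
  set Bad1 : Set ℝ := ⋃ γ ∈ D.Φ, ⋃ q : ℤ, {s : ℝ | ⟪γ, b⟫ + s * ⟪γ, w⟫ = (q : ℝ)} with hBad1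
  set Bad2 : Set ℝ := ⋃ γ ∈ D.Φ, ⋃ γ' ∈ D.Φ, ⋃ q : ℤ, ⋃ q' : ℤ,
    {s : ℝ | ⟪γ, dv⟫ ≠ 0 ∧ ⟪γ', dv⟫ ≠ 0 ∧ (¬∃ c : ℝ, γ' = c • γ) ∧
      ⟪γ', dv⟫ * ((q : ℝ) - (⟪γ, b⟫ + s * ⟪γ, w⟫)) =
        ⟪γ, dv⟫ * ((q' : ℝ) - (⟪γ', b⟫ + s * ⟪γ', w⟫))} with hBad2
  have hc1 : Bad1.Countable := by
    apply Set.Countable.biUnion (D.finite.countable)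
    intro γ hγ
    apply Set.countable_iUnion
    intro q
    apply Set.Subsingleton.countable
    intro s hs s' hs'
    simp only [Set.mem_setOf_eq] at hs hs'
    have : s * ⟪γ, w⟫ = s' * ⟪γ, w⟫ := by linarith
    exact mul_right_cancel₀ (hwΦ γ hγ) this
  have hc2 : Bad2.Countable := by
    apply Set.Countable.biUnion (D.finite.countable)
    intro γ hγ
    apply Set.Countable.biUnion (D.finite.countable)
    intro γ' hγ'
    apply Set.countable_iUnion
    intro q
    apply Set.countable_iUnion
    intro q'
    apply Set.Subsingleton.countable
    intro s hs s' hs'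
    obtain ⟨he, he', hnp, heq⟩ := hs
    obtain ⟨_, _, _, heq'⟩ := hs'
    have hvne : ⟪γ', dv⟫ • γ - ⟪γ, dv⟫ • γ' ≠ 0 := by
      intro h0
      apply hnp
      refine ⟨⟪γ', dv⟫ / ⟪γ, dv⟫, ?_⟩
      have h1 : ⟪γ', dv⟫ • γ = ⟪γ, dv⟫ • γ' := by
        have := sub_eq_zero.1 h0
        exact this
      calc γ' = (1 / ⟪γ, dv⟫) • (⟪γ, dv⟫ • γ') := by
              rw [smul_smul, one_div_mul_cancel he, one_smul]
        _ = (1 / ⟪γ, dv⟫) • (⟪γ', dv⟫ • γ) := by rw [h1]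
        _ = (⟪γ', dv⟫ / ⟪γ, dv⟫) • γ := by rw [smul_smul, one_div_mul_eq_div]
    have hslope : ⟪⟪γ', dv⟫ • γ - ⟪γ, dv⟫ • γ', w⟫ ≠ 0 :=
      hw _ (Or.inr ⟨hvne, γ, hγ, γ', hγ', rfl⟩)
    rw [inner_sub_left, real_inner_smul_left, real_inner_smul_left] at hslope
    have hdiff : (s - s') * (⟪γ', dv⟫ * ⟪γ, w⟫ - ⟪γ, dv⟫ * ⟪γ', w⟫) = 0 := by nlinarith
    rcases mul_eq_zero.1 hdiff with h | h
    · linarith [sub_eq_zero.1 h]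
    · exact absurd h (by intro hh; apply hslope; linarith)
  have hBadc : (Bad1 ∪ Bad2).Countable := hc1.union hc2
  -- continuity: small s keeps the strict conditions
  have hev : ∀ᶠ s in 𝓝 (0:ℝ), ∀ α ∈ D.finite.toFinset,
      ((α ∈ PhiJpos D J → 0 < ⟪α, b⟫ + s * ⟪α, w⟫ ∧ ⟪α, b⟫ + s * ⟪α, w⟫ < 1) ∧
       (α ∈ D.pos \ PhiJpos D J → ⟪α, b⟫ + s * ⟪α, w⟫ < (nb α : ℝ))) := by
    rw [Filter.eventually_all_finset]
    intro α hα
    have htend : Filter.Tendsto (fun s : ℝ => ⟪α, b⟫ + s * ⟪α, w⟫) (𝓝 0) (𝓝 (⟪α, b⟫)) := by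
      have h : Continuous (fun s : ℝ => ⟪α, b⟫ + s * ⟪α, w⟫) :=
        continuous_const.add (continuous_id.mul continuous_const)
      have := h.tendsto 0
      simpa using this
    have h1 : ∀ᶠ s in 𝓝 (0:ℝ),
        α ∈ PhiJpos D J → 0 < ⟪α, b⟫ + s * ⟪α, w⟫ ∧ ⟪α, b⟫ + s * ⟪α, w⟫ < 1 := by
      by_cases hmem : α ∈ PhiJpos D J
      · obtain ⟨_, hb1, hb2⟩ := hJ α hmem
        filter_upwards [htend.eventually_const_lt hb1, htend.eventually_lt_const hb2]
          with s hs1 hs2 _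
        exact ⟨hs1, hs2⟩
      · filter_upwards with s hmem'
        exact absurd hmem' hmem
    have h2 : ∀ᶠ s in 𝓝 (0:ℝ),
        α ∈ D.pos \ PhiJpos D J → ⟪α, b⟫ + s * ⟪α, w⟫ < (nb α : ℝ) := by
      by_cases hmem : α ∈ D.pos \ PhiJpos D J
      · obtain ⟨_, hb1⟩ := hB α hmem
        filter_upwards [htend.eventually_lt_const hb1] with s hs _
        exact hs
      · filter_upwards with s hmem'
        exact absurd hmem' hmem
    exact h1.and h2
  obtain ⟨δ, hδpos, hδ⟩ := Metric.eventually_nhds_iff.1 hev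
  -- pick a good s
  have hvol : volume (Set.Ioo (0:ℝ) δ) ≠ 0 := by
    rw [Real.volume_Ioo]
    simp [hδpos]
  have hnsub : ¬ (Set.Ioo (0:ℝ) δ ⊆ Bad1 ∪ Bad2) := by
    intro hsub
    have h1 := measure_mono (μ := volume) hsub
    rw [hBadc.measure_zero] at h1
    exact hvol (le_antisymm h1 zero_le)
  obtain ⟨s, hsIoo, hsBad⟩ := Set.not_subset.1 hnsub
  have hsmall : dist s (0:ℝ) < δ := by
    rw [Real.dist_eq, sub_zero, abs_of_pos hsIoo.1]
    exact hsIoo.2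
  have hcond := hδ hsmall
  refine ⟨b + s • w, dv, ?_, ?_, ?_, ?_⟩
  · intro α hα
    have := (hcond α (D.finite.mem_toFinset.2 hα.2.1)).1 hα
    rw [hlin]
    exact ⟨(hJ α hα).1, this.1, this.2⟩
  · intro β hβ
    have := (hcond β (D.finite.mem_toFinset.2 (D.pos_sub hβ.1))).2 hβ
    rw [hlin]
    exact ⟨(hB β hβ).1, this⟩
  · intro γ hγ q hq
    apply hsBad
    left
    rw [hBad1]
    refine Set.mem_biUnion hγ ?_
    refine Set.mem_iUnion.2 ⟨q, ?_⟩
    rw [hlin] at hq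
    exact hq
  · intro γ hγ γ' hγ' q q' he he' hnp heq
    apply hsBad
    right
    rw [hBad2]
    refine Set.mem_biUnion hγ ?_
    refine Set.mem_biUnion hγ' ?_
    refine Set.mem_iUnion.2 ⟨q, Set.mem_iUnion.2 ⟨q', ?_⟩⟩
    rw [hlin γ s, hlin γ' s] at heq
    exact ⟨he, he', hnp, heq⟩

end

end SectorProof
open SectorProof SectorProof.Setup

set_option maxHeartbeats 2000000 in
/-- Corollary: every `(J,y)`-sector which is not a single alcove contains a
regular minimal infinite gallery. -/
theorem sector_contains_regular_gallery {n : ℕ} (D : RootData n)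
    (J : Set (Fin n)) (w0 : Equiv.Perm (V n)) (hw0 : IsLongest D w0)
    (nb : V n → ℤ) (y : AffW D)
    (u : Equiv.Perm (V n)) (hu : u ∈ FinW D)
    (μ : V n) (hμ : μ ∈ corootLattice D)
    (hy : ∀ v : V n, (y : Equiv.Perm (V n)) v = u v + μ)
    (hmulti : ∃ c c', IsAlcove D c ∧ IsAlcove D c' ∧ c ⊆ sectorJY D J w0 y nb ∧
      c' ⊆ sectorJY D J w0 y nb ∧ c ≠ c') :
    ∃ Γ : InfPreGallery n, IsInfGallery D Γ ∧
      (∀ i, Γ.c i ⊆ sectorJY D J w0 y nb) ∧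
      InfMinimal D Γ ∧ RegularWrt D J w0 u μ nb Γ := by
  classical
  have hNu : Nice D u := nice_of_mem_FinW D hu
  have hinvΦ : ∀ γ ∈ D.Φ, u⁻¹ γ ∈ D.Φ := fun γ hγ => hNu.inv.2.2.2 γ hγ
  have huΦ : ∀ γ ∈ D.Φ, u γ ∈ D.Φ := fun γ hγ => hNu.2.2.2 γ hγ
  by_cases hJfull : D.pos \ PhiJpos D J = ∅
  · -- degenerate case: the sector is a single alcove, contradicting `hmulti`
    exfalso
    obtain ⟨c, c', hc, hc', hcs, hcs', hne⟩ := hmulti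
    have hposJ : D.pos ⊆ PhiJpos D J := by
      intro a ha
      by_contra hna
      have : a ∈ D.pos \ PhiJpos D J := ⟨ha, hna⟩
      rw [hJfull] at this
      exact this
    have key : ∀ (v : V n), v ∈ (wallUnion D)ᶜ →
        closure (connectedComponentIn (wallUnion D)ᶜ v) ⊆ sectorJY D J w0 y nb →
        ∀ γ ∈ D.Φ, (⌊⟪γ, v⟫⌋ : ℝ) =
          (if u⁻¹ γ ∈ D.pos then ⟪γ, μ⟫ else ⟪γ, μ⟫ - 1) := by
      intro v hv hsub γ hγ
      have hvoff := (offWall_iff D v).1 hv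
      have hvmem : v ∈ sectorJY D J w0 y nb :=
        hsub (subset_closure (mem_connectedComponentIn hv))
      obtain ⟨wv, hwvS, hwvy⟩ := hvmem
      have hvval : ⟪γ, v⟫ = ⟪u⁻¹ γ, wv⟫ + ⟪γ, μ⟫ := by
        rw [← hwvy, hy wv, inner_add_right, hNu.inner_apply_right]
      have hαΦ : u⁻¹ γ ∈ D.Φ := hinvΦ γ hγ
      have hwv1 : ∀ a ∈ D.pos, 0 ≤ ⟪a, wv⟫ ∧ ⟪a, wv⟫ ≤ 1 := by
        intro a ha
        have haJ := hposJ ha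
        have hmem := Set.mem_iInter₂.1 hwvS.1 a haJ
        rw [halfFor_pos_one D ha, halfFor_w0 D hw0 ha] at hmem
        exact ⟨hmem.1, hmem.2⟩
      obtain ⟨z, hz⟩ := mu_int D hμ hγ
      by_cases hcase : u⁻¹ γ ∈ D.pos
      · rw [if_pos hcase]
        obtain ⟨h0, h1⟩ := hwv1 _ hcase
        have hb1 : (z : ℝ) ≤ ⟪γ, v⟫ := by rw [hvval, hz]; linarith
        have hb2 : ⟪γ, v⟫ ≤ (z : ℝ) + 1 := by rw [hvval, hz]; linarith
        have hne1 : ⟪γ, v⟫ ≠ (z : ℝ) := hvoff γ hγ z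
        have hne2 : ⟪γ, v⟫ ≠ (z : ℝ) + 1 := by
          have := hvoff γ hγ (z + 1)
          push_cast at this
          exact this
        have hfl : ⌊⟪γ, v⟫⌋ = z := floor_of_Ioo' (lt_of_le_of_ne hb1 (Ne.symm hne1))
          (lt_of_le_of_ne hb2 hne2)
        rw [hfl, hz]
      · rw [if_neg hcase]
        have hnegpos : -(u⁻¹ γ) ∈ D.pos := (D.pos_total _ hαΦ).resolve_left hcase
        obtain ⟨h0, h1⟩ := hwv1 _ hnegpos
        rw [inner_neg_left] at h0 h1
        have hb1 : (z : ℝ) - 1 ≤ ⟪γ, v⟫ := by rw [hvval, hz]; linarith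
        have hb2 : ⟪γ, v⟫ ≤ (z : ℝ) := by rw [hvval, hz]; linarith
        have hne1 : ⟪γ, v⟫ ≠ (z : ℝ) := hvoff γ hγ z
        have hne2 : ⟪γ, v⟫ ≠ (z : ℝ) - 1 := by
          have := hvoff γ hγ (z - 1)
          push_cast at this
          exact this
        have hfl : ⌊⟪γ, v⟫⌋ = z - 1 := by
          apply floor_of_Ioo (lt_of_le_of_ne hb1 (Ne.symm hne2))
            (lt_of_le_of_ne hb2 hne1)
        rw [hfl, hz]
        push_cast
        ring
    obtain ⟨v, hv, rfl⟩ := hc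
    obtain ⟨v', hv', rfl⟩ := hc'
    have hfl : ∀ γ ∈ D.Φ, ⌊⟪γ, v⟫⌋ = ⌊⟪γ, v'⟫⌋ := by
      intro γ hγ
      have h1 := key v hv hcs γ hγ
      have h2 := key v' hv' hcs' γ hγ
      exact_mod_cast h1.trans h2.symm
    apply hne
    rw [connectedComponentIn_eq_RB D ((offWall_iff D v).1 hv),
        connectedComponentIn_eq_RB D ((offWall_iff D v').1 hv')]
    have hRB : RB D v = RB D v' := by
      ext w
      simp only [RB, Set.mem_setOf_eq]
      constructor
      · intro h γ hγ
        have := h γ hγ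
        rwa [hfl γ hγ] at this
      · intro h γ hγ
        have := h γ hγ
        rwa [← hfl γ hγ] at this
    rw [hRB]
  · -- main case
    obtain ⟨β0, hβ0⟩ := Set.nonempty_iff_ne_empty.2 hJfull
    obtain ⟨x, dv, hgJ, hgB, hgen1, hgen2⟩ := exists_generic D J nb
    have hux : ∀ γ : V n, ⟪γ, u x + μ⟫ = ⟪u⁻¹ γ, x⟫ + ⟪γ, μ⟫ := fun γ => by
      rw [inner_add_right, hNu.inner_apply_right]
    have hud : ∀ γ : V n, ⟪γ, u dv⟫ = ⟪u⁻¹ γ, dv⟫ := fun γ =>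
      hNu.inner_apply_right γ dv
    have hdir_ne : ∀ γ ∈ D.Φ, ∀ t : ℝ, ∀ q : ℤ, ⟪γ, u dv⟫ = 0 →
        ⟪γ, u x + μ⟫ + t * ⟪γ, u dv⟫ ≠ (q : ℝ) := by
      intro γ hγ t q he hval
      obtain ⟨z, hz⟩ := mu_int D hμ hγ
      rw [he, mul_zero, add_zero, hux, hz] at hval
      apply hgen1 (u⁻¹ γ) (hinvΦ γ hγ) (q - z)
      push_cast
      linarith
    set S : SectorProof.Setup D :=
      { x0 := u x + μ
        dir := u dv
        offw := by
          intro γ hγ q hq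
          obtain ⟨z, hz⟩ := mu_int D hμ hγ
          rw [hux, hz] at hq
          apply hgen1 (u⁻¹ γ) (hinvΦ γ hγ) (q - z)
          push_cast
          linarith
        uniq := by
          intro α hα α' hα' q q' t ht h1 h2
          have hγΦ : u⁻¹ α ∈ D.Φ := hinvΦ α hα
          have hγ'Φ : u⁻¹ α' ∈ D.Φ := hinvΦ α' hα'
          obtain ⟨z, hz⟩ := mu_int D hμ hα
          obtain ⟨z', hz'⟩ := mu_int D hμ hα'
          have he : ⟪u⁻¹ α, dv⟫ ≠ 0 := by
            intro he0
            exact hdir_ne α hα t q (by rw [hud]; exact he0) h1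
          have he' : ⟪u⁻¹ α', dv⟫ ≠ 0 := by
            intro he0
            exact hdir_ne α' hα' t q' (by rw [hud]; exact he0) h2
          by_cases hpar : ∃ c : ℝ, u⁻¹ α' = c • (u⁻¹ α)
          · obtain ⟨cc, hcc⟩ := hpar
            have hccΦ : cc • (u⁻¹ α) ∈ D.Φ := by rw [← hcc]; exact hγ'Φ
            have happ : u (u⁻¹ α') = α' := Equiv.Perm.apply_inv_self u α'
            have happ2 : u (u⁻¹ α) = α := Equiv.Perm.apply_inv_self u α
            rcases D.reduced _ hγΦ cc hccΦ with hcc1 | hcc1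
            · left
              have hαeq : α' = α := by
                rw [← happ, hcc, hcc1, one_smul, happ2]
              have hqq : (q : ℝ) = (q' : ℝ) := by
                rw [← h1, ← h2, hαeq]
              exact ⟨hαeq, by exact_mod_cast hqq.symm⟩
            · right
              have hαeq : α' = -α := by
                rw [← happ, hcc, hcc1]
                rw [show (-1 : ℝ) • (u⁻¹ α) = (-1 : ℝ) • (u⁻¹ α) from rfl]
                have := hNu.2.2.1 (-1 : ℝ) (u⁻¹ α)
                rw [this, happ2, neg_one_smul]
              have hqq : (q' : ℝ) = -(q : ℝ) := by
                rw [← h1, ← h2, hαeq, inner_neg_left, inner_neg_left]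
                ring
              exact ⟨hαeq, by exact_mod_cast hqq⟩
          · exfalso
            apply hgen2 (u⁻¹ α) hγΦ (u⁻¹ α') hγ'Φ (q - z) (q' - z') he he' hpar
            have e1 : ((q - z : ℤ) : ℝ) - ⟪u⁻¹ α, x⟫ = t * ⟪u⁻¹ α, dv⟫ := by
              rw [hux, hz, hud] at h1
              push_cast
              linarith
            have e2 : ((q' - z' : ℤ) : ℝ) - ⟪u⁻¹ α', x⟫ = t * ⟪u⁻¹ α', dv⟫ := by
              rw [hux, hz', hud] at h2
              push_cast
              linarith
            rw [e1, e2]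
            ring
        down := by
          refine ⟨u β0, huΦ β0 (D.pos_sub hβ0.1), ?_⟩
          rw [hud, Equiv.Perm.inv_apply_self]
          exact (hgB β0 hβ0).1 } with hS
    -- value computations along the ray
    have hval : ∀ β : V n, β ∈ D.Φ → ∀ i : ℕ, ∀ z : ℤ, ⟪u β, μ⟫ = (z : ℝ) →
        ⟪u β, S.pt i⟫ = (z : ℝ) + ⟪β, x⟫ + S.sm i * ⟪β, dv⟫ := by
      intro β hβ i z hz
      rw [SectorProof.Setup.pt, S.inner_g]
      have h1 : ⟪u β, S.x0⟫ = ⟪β, x⟫ + (z : ℝ) := by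
        show ⟪u β, u x + μ⟫ = _
        rw [hux, Equiv.Perm.inv_apply_self, hz]
      have h2 : ⟪u β, S.dir⟫ = ⟪β, dv⟫ := by
        show ⟪u β, u dv⟫ = _
        rw [hud, Equiv.Perm.inv_apply_self]
      rw [h1, h2]
      ring
    refine ⟨S.gal, S.isInfGallery_gal, ?_, S.infMinimal_gal, ?_⟩
    · -- containment in the sector
      intro i v hvmem
      have hbox := S.gal_c_sub_box i hvmem
      refine ⟨u⁻¹ (v - μ), ?_, ?_⟩
      swap
      · show (y : Equiv.Perm (V n)) (u⁻¹ (v - μ)) = v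
        rw [hy, Equiv.Perm.apply_inv_self]
        abel
      constructor
      · apply Set.mem_iInter₂.2
        intro a ha
        have hapos : a ∈ D.pos := ha.1
        have haΦ : a ∈ D.Φ := ha.2.1
        rw [halfFor_pos_one D hapos, halfFor_w0 D hw0 hapos]
        obtain ⟨z, hz⟩ := mu_int D hμ (huΦ a haΦ)
        have hv1 := hval a haΦ i z hz
        rw [(hgJ a ha).1, mul_zero, add_zero] at hv1
        have hfl : ⌊⟪u a, S.pt i⟫⌋ = z := by
          rw [hv1]
          apply floor_of_Ioo'
          · linarith [(hgJ a ha).2.1]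
          · linarith [(hgJ a ha).2.2]
        have hbnd := hbox (u a) (huΦ a haΦ)
        rw [hfl] at hbnd
        have hin : ⟪a, u⁻¹ (v - μ)⟫ = ⟪u a, v⟫ - ⟪u a, μ⟫ := by
          rw [hNu.inner_inv_right, inner_sub_right]
        constructor
        · show (0:ℝ) ≤ ⟪a, u⁻¹ (v - μ)⟫
          rw [hin, hz]
          linarith [hbnd.1]
        · show ⟪a, u⁻¹ (v - μ)⟫ ≤ 1
          rw [hin, hz]
          linarith [hbnd.2]
      · apply Set.mem_iInter₂.2
        intro β hβ
        rw [halfFor_w0 D hw0 hβ.1]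
        obtain ⟨z, hz⟩ := mu_int D hμ (huΦ β (D.pos_sub hβ.1))
        have hv1 := hval β (D.pos_sub hβ.1) i z hz
        have hvlt : ⟪u β, S.pt i⟫ < (z : ℝ) + (nb β : ℝ) := by
          rw [hv1]
          have h1 := (hgB β hβ).2
          have h2 : S.sm i * ⟪β, dv⟫ < 0 :=
            mul_neg_of_pos_of_neg (S.sm_pos i) (hgB β hβ).1
          linarith
        have hfl : ⌊⟪u β, S.pt i⟫⌋ < z + nb β := by
          rw [Int.floor_lt]
          push_cast
          exact hvlt
        have hbnd := hbox (u β) (huΦ β (D.pos_sub hβ.1))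
        show ⟪β, u⁻¹ (v - μ)⟫ ≤ (nb β : ℝ)
        have hin : ⟪β, u⁻¹ (v - μ)⟫ = ⟪u β, v⟫ - ⟪u β, μ⟫ := by
          rw [hNu.inner_inv_right, inner_sub_right]
        rw [hin, hz]
        have hfl' : (⌊⟪u β, S.pt i⟫⌋ : ℝ) + 1 ≤ (z : ℝ) + (nb β : ℝ) := by
          have : ⌊⟪u β, S.pt i⟫⌋ + 1 ≤ z + nb β := hfl
          exact_mod_cast this
        linarith [hbnd.2]
    · -- regularity
      intro β hβ k _
      rw [halfFor_u_w0 D hw0 hNu hβ.1]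
      obtain ⟨z, hz⟩ := mu_int D hμ (huΦ β (D.pos_sub hβ.1))
      set C : ℝ := (z : ℝ) + ⟪β, x⟫ with hC
      have he : ⟪β, dv⟫ < 0 := (hgB β hβ).1
      obtain ⟨i, hi⟩ := S.sm_unbounded (((k : ℝ) - C) / ⟪β, dv⟫)
      refine ⟨i, ?_⟩
      intro v hvmem
      have hbox := S.gal_c_sub_box i hvmem
      have hv1 := hval β (D.pos_sub hβ.1) i z hz
      have hsmall : ⟪u β, S.pt i⟫ < (k : ℝ) := by
        rw [hv1]
        have hmul := mul_lt_mul_of_neg_right hi he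
        rw [div_mul_cancel₀ _ (ne_of_lt he)] at hmul
        rw [hC] at hmul
        linarith
      have hfl : ⌊⟪u β, S.pt i⟫⌋ < k := Int.floor_lt.2 hsmall
      have hbnd := hbox (u β) (huΦ β (D.pos_sub hβ.1))
      show ⟪u β, v⟫ ≤ (k : ℝ)
      have hfl' : (⌊⟪u β, S.pt i⟫⌋ : ℝ) + 1 ≤ (k : ℝ) := by
        have : ⌊⟪u β, S.pt i⟫⌋ + 1 ≤ k := hfl
        exact_mod_cast this
      linarith [hbnd.2]
end

section
/- Let H = H_{α,k} be any hyperplane and let γ be any combinatorial gallery in V. For every H-outcrop L of γ and every H-ingrowth L′ of γ, the galleries e_H^L(γ) and f_H^{L′}(γ) are combinatorial galleries with the same first face as γ and the same type as γ. -/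
open scoped RealInnerProductSpace
open scoped Classical

section FlipAux

variable {n : ℕ}

lemma inner_coroot_self {α : V n} (hne : α ≠ 0) : ⟪α, coroot α⟫ = 2 := by
  have h : ⟪α, α⟫ ≠ 0 := fun hz => hne ((inner_self_eq_zero (𝕜 := ℝ)).mp hz)
  simp only [coroot, real_inner_smul_right]
  exact div_mul_cancel₀ 2 h

lemma sRefl_invol {α : V n} (hne : α ≠ 0) (k : ℝ) : Function.Involutive (sRefl α k) := by
  intro v
  show (v - (⟪α,v⟫-k) • coroot α) - (⟪α, v - (⟪α,v⟫-k) • coroot α⟫ - k) • coroot α = v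
  rw [inner_sub_right, real_inner_smul_right, inner_coroot_self hne, sub_sub, ← add_smul]
  have h : (⟪α,v⟫ - k) + ((⟪α,v⟫ - (⟪α,v⟫-k)*2) - k) = 0 := by ring
  rw [h, zero_smul, sub_zero]

lemma sRefl_fix {α : V n} {k : ℝ} {v : V n} (hv : v ∈ Hy α k) : sRefl α k v = v := by
  have : ⟪α, v⟫ = k := hv
  simp [sRefl, this]

lemma sRefl_image_fix {α : V n} {k : ℝ} {X : Set (V n)} (hX : X ⊆ Hy α k) :
    sRefl α k '' X = X := by
  ext x
  constructor
  · rintro ⟨a, ha, rfl⟩; rwa [sRefl_fix (hX ha)]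
  · intro hx; exact ⟨x, hx, sRefl_fix (hX hx)⟩

lemma sRefl_cont (α : V n) (k : ℝ) : Continuous (sRefl α k) :=
  by unfold sRefl; fun_prop

lemma sRefl_inner (α : V n) (k : ℝ) (β v : V n) :
    ⟪β, sRefl α k v⟫ = ⟪β - (2*⟪α,β⟫/⟪α,α⟫) • α, v⟫ + (2*⟪α,β⟫/⟪α,α⟫)*k := by
  simp only [sRefl, coroot, inner_sub_right, inner_sub_left, real_inner_smul_right,
    real_inner_smul_left]
  rw [real_inner_comm β α]
  ring

lemma mem_image_invol {f : V n → V n} (hf : Function.Involutive f) (A : Set (V n)) (x : V n) :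
    x ∈ f '' A ↔ f x ∈ A := by
  constructor
  · rintro ⟨a, ha, rfl⟩; rwa [hf a]
  · intro h; exact ⟨f x, h, hf x⟩

lemma image_image_invol {f : V n → V n} (hf : Function.Involutive f) (A : Set (V n)) :
    f '' (f '' A) = A := by
  ext x; rw [mem_image_invol hf, mem_image_invol hf, hf x]

variable (D : RootData n) {α : V n}

lemma key2 (hα : α ∈ D.Φ) (k : ℤ) {β : V n} (hβ : β ∈ D.Φ) (m : ℤ) :
    ∃ β' ∈ D.Φ, ∃ m' : ℤ, ∀ v : V n,
      (⟪β, sRefl α (k:ℝ) v⟫ = (m:ℝ) ↔ ⟪β', v⟫ = (m':ℝ)) ∧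
      (⟪β, sRefl α (k:ℝ) v⟫ < (m:ℝ) ↔ ⟪β', v⟫ < (m':ℝ)) := by
  obtain ⟨mb, hmb⟩ := D.crystallographic α hα β hβ
  have hβ' : β - ((mb:ℝ)) • α ∈ D.Φ := by rw [← hmb]; exact D.reflect_mem α hα β hβ
  refine ⟨β - ((mb:ℝ)) • α, hβ', m - mb*k, fun v => ?_⟩
  have h := sRefl_inner α (k:ℝ) β v
  rw [hmb] at h
  push_cast
  constructor <;> constructor <;> intro h' <;>
    [skip; skip; skip; skip] <;> linarith [h, h']

lemma rHomeo_coe' : True := trivial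

/-- The reflection as a homeomorphism. -/
noncomputable def rHomeo (hne : α ≠ 0) (k : ℝ) : V n ≃ₜ V n where
  toEquiv := Function.Involutive.toPerm _ (sRefl_invol hne k)
  continuous_toFun := sRefl_cont α k
  continuous_invFun := sRefl_cont α k

lemma rHomeo_coe (hne : α ≠ 0) (k : ℝ) : ⇑(rHomeo hne k) = sRefl α k := rfl

lemma mem_wall_iff {v : V n} : v ∈ wallUnion D ↔ ∃ β ∈ D.Φ, ∃ m : ℤ, ⟪β, v⟫ = (m:ℝ) := by
  simp [wallUnion, Hy]

lemma sRefl_mem_wall (hα : α ∈ D.Φ) (k : ℤ) (v : V n) :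
    sRefl α (k:ℝ) v ∈ wallUnion D ↔ v ∈ wallUnion D := by
  have hne : α ≠ 0 := D.nonzero α hα
  constructor
  · intro h
    rw [mem_wall_iff] at h ⊢
    obtain ⟨β, hβ, m, hm⟩ := h
    obtain ⟨β', hβ', m', hkey⟩ := key2 D hα k hβ m
    exact ⟨β', hβ', m', ((hkey v).1).mp hm⟩
  · intro h
    rw [mem_wall_iff] at h ⊢
    obtain ⟨β, hβ, m, hm⟩ := h
    obtain ⟨β', hβ', m', hkey⟩ := key2 D hα k hβ m
    refine ⟨β', hβ', m', ?_⟩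
    have := (hkey (sRefl α (k:ℝ) v)).1
    rw [sRefl_invol hne (k:ℝ) v] at this
    exact this.mp hm

lemma sRefl_image_wallc (hα : α ∈ D.Φ) (k : ℤ) :
    sRefl α (k:ℝ) '' (wallUnion D)ᶜ = (wallUnion D)ᶜ := by
  have hne : α ≠ 0 := D.nonzero α hα
  ext x
  rw [mem_image_invol (sRefl_invol hne (k:ℝ))]
  simp only [Set.mem_compl_iff]
  rw [sRefl_mem_wall D hα k x]

lemma isAlcove_image (hα : α ∈ D.Φ) (k : ℤ) {c : Set (V n)} (hc : IsAlcove D c) :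
    IsAlcove D (sRefl α (k:ℝ) '' c) := by
  have hne : α ≠ 0 := D.nonzero α hα
  obtain ⟨v, hv, rfl⟩ := hc
  refine ⟨sRefl α (k:ℝ) v, ?_, ?_⟩
  · rw [Set.mem_compl_iff, sRefl_mem_wall D hα k v]; exact hv
  · have h1 : sRefl α (k:ℝ) '' closure (connectedComponentIn (wallUnion D)ᶜ v)
        = closure (sRefl α (k:ℝ) '' connectedComponentIn (wallUnion D)ᶜ v) :=
      (rHomeo hne (k:ℝ)).image_closure _
    rw [h1]
    have h2 : sRefl α (k:ℝ) '' connectedComponentIn (wallUnion D)ᶜ v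
        = connectedComponentIn (sRefl α (k:ℝ) '' (wallUnion D)ᶜ) (sRefl α (k:ℝ) v) :=
      (rHomeo hne (k:ℝ)).image_connectedComponentIn hv
    rw [h2, sRefl_image_wallc D hα k]

lemma condt (hα : α ∈ D.Φ) (k : ℤ) (v w : V n)
    (h : ∀ β ∈ D.Φ, ∀ m : ℤ,
      (⟪β, sRefl α (k:ℝ) w⟫ = (m:ℝ) ↔ ⟪β, v⟫ = (m:ℝ)) ∧
      (⟪β, sRefl α (k:ℝ) w⟫ < (m:ℝ) ↔ ⟪β, v⟫ < (m:ℝ))) :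
    ∀ β ∈ D.Φ, ∀ m : ℤ,
      (⟪β, w⟫ = (m:ℝ) ↔ ⟪β, sRefl α (k:ℝ) v⟫ = (m:ℝ)) ∧
      (⟪β, w⟫ < (m:ℝ) ↔ ⟪β, sRefl α (k:ℝ) v⟫ < (m:ℝ)) := by
  have hne : α ≠ 0 := D.nonzero α hα
  intro β hβ m
  obtain ⟨β', hβ', m', hkey⟩ := key2 D hα k hβ m
  have hw := hkey (sRefl α (k:ℝ) w)
  rw [sRefl_invol hne (k:ℝ) w] at hw
  have hv := hkey v
  have hh := h β' hβ' m'
  exact ⟨hw.1.trans (hh.1.trans hv.1.symm), hw.2.trans (hh.2.trans hv.2.symm)⟩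

lemma faceSet_image (hα : α ∈ D.Φ) (k : ℤ) (v : V n) :
    sRefl α (k:ℝ) '' {w | ∀ β ∈ D.Φ, ∀ m : ℤ,
        (⟪β, w⟫ = (m:ℝ) ↔ ⟪β, v⟫ = (m:ℝ)) ∧ (⟪β, w⟫ < (m:ℝ) ↔ ⟪β, v⟫ < (m:ℝ))}
      = {w | ∀ β ∈ D.Φ, ∀ m : ℤ,
        (⟪β, w⟫ = (m:ℝ) ↔ ⟪β, sRefl α (k:ℝ) v⟫ = (m:ℝ)) ∧
        (⟪β, w⟫ < (m:ℝ) ↔ ⟪β, sRefl α (k:ℝ) v⟫ < (m:ℝ))} := by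
  have hne : α ≠ 0 := D.nonzero α hα
  ext x
  rw [mem_image_invol (sRefl_invol hne (k:ℝ))]
  simp only [Set.mem_setOf_eq]
  constructor
  · intro h
    exact condt D hα k v x h
  · intro h
    have h2 : ∀ β ∈ D.Φ, ∀ m : ℤ,
        (⟪β, sRefl α (k:ℝ) (sRefl α (k:ℝ) x)⟫ = (m:ℝ) ↔ ⟪β, sRefl α (k:ℝ) v⟫ = (m:ℝ)) ∧
        (⟪β, sRefl α (k:ℝ) (sRefl α (k:ℝ) x)⟫ < (m:ℝ) ↔ ⟪β, sRefl α (k:ℝ) v⟫ < (m:ℝ)) := by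
      rw [sRefl_invol hne (k:ℝ) x]; exact h
    have h3 := condt D hα k (sRefl α (k:ℝ) v) (sRefl α (k:ℝ) x) h2
    rw [sRefl_invol hne (k:ℝ) v] at h3
    exact h3

lemma isFace_image (hα : α ∈ D.Φ) (k : ℤ) {F : Set (V n)} (hF : IsFace D F) :
    IsFace D (sRefl α (k:ℝ) '' F) := by
  have hne : α ≠ 0 := D.nonzero α hα
  obtain ⟨v, rfl⟩ := hF
  refine ⟨sRefl α (k:ℝ) v, ?_⟩
  rw [← faceSet_image D hα k v]
  have h := (rHomeo hne (k:ℝ)).image_closure {w | ∀ β ∈ D.Φ, ∀ m : ℤ,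
        (⟪β, w⟫ = (m:ℝ) ↔ ⟪β, v⟫ = (m:ℝ)) ∧ (⟪β, w⟫ < (m:ℝ) ↔ ⟪β, v⟫ < (m:ℝ))}
  rw [rHomeo_coe] at h
  exact h

lemma hyp_image (hα : α ∈ D.Φ) (k : ℤ) {H : Set (V n)} (hH : H ∈ hyperplanes D) :
    sRefl α (k:ℝ) '' H ∈ hyperplanes D := by
  have hne : α ≠ 0 := D.nonzero α hα
  obtain ⟨β, hβ, m, rfl⟩ := hH
  obtain ⟨β', hβ', m', hkey⟩ := key2 D hα k hβ m
  refine ⟨β', hβ', m', ?_⟩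
  ext x
  rw [mem_image_invol (sRefl_invol hne (k:ℝ))]
  exact (hkey x).1

lemma panel_image (hα : α ∈ D.Φ) (k : ℤ) {p c : Set (V n)} (h : IsPanelOf D p c) :
    IsPanelOf D (sRefl α (k:ℝ) '' p) (sRefl α (k:ℝ) '' c) := by
  have hne : α ≠ 0 := D.nonzero α hα
  have hinv := sRefl_invol hne (k:ℝ)
  obtain ⟨hc, hp, ⟨H, hH, hpcH⟩, H₀, ⟨hH₀, hpH₀⟩, huniq⟩ := h
  refine ⟨isAlcove_image D hα k hc, isFace_image D hα k hp,
    ⟨sRefl α (k:ℝ) '' H, hyp_image D hα k hH, by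
      rw [hpcH, Set.image_inter hinv.injective]⟩,
    sRefl α (k:ℝ) '' H₀, ⟨hyp_image D hα k hH₀, Set.image_mono hpH₀⟩, ?_⟩
  rintro H' ⟨hH', hsub⟩
  have hpsub : p ⊆ sRefl α (k:ℝ) '' H' := by
    intro x hx
    rw [mem_image_invol hinv]
    exact hsub ⟨x, hx, rfl⟩
  have h1 : sRefl α (k:ℝ) '' H' = H₀ := huniq _ ⟨hyp_image D hα k hH', hpsub⟩
  calc H' = sRefl α (k:ℝ) '' (sRefl α (k:ℝ) '' H') := (image_image_invol hinv H').symm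
    _ = sRefl α (k:ℝ) '' H₀ := by rw [h1]

lemma sameTypeFace_sRefl (hα : α ∈ D.Φ) (k : ℤ) (σ : Set (V n)) :
    SameTypeFace D σ (sRefl α (k:ℝ) '' σ) := by
  have hne : α ≠ 0 := D.nonzero α hα
  refine ⟨Function.Involutive.toPerm (sRefl α (k:ℝ)) (sRefl_invol hne (k:ℝ)), ?_, ?_⟩
  · exact Subgroup.subset_closure ⟨α, hα, k, rfl⟩
  · rw [Function.Involutive.coe_toPerm]

lemma sameTypeFace_self (σ : Set (V n)) : SameTypeFace D σ σ :=
  ⟨1, one_mem _, by simp⟩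

lemma flip_main (hα : α ∈ D.Φ) (k : ℤ)
    (γ : PreGallery n) (hγ : IsGallery D γ) (L : Set ℕ)
    (hL : ∀ i ∈ L, ∃ P : Set ℕ, i ∈ P ∧ P ⊆ L ∧
      ((∃ j m, j < m ∧ γ.p j ⊆ Hy α (k:ℝ) ∧ γ.p m ⊆ Hy α (k:ℝ) ∧ P = Set.Ico j m) ∨
       (∃ j, γ.p j ⊆ Hy α (k:ℝ) ∧ P = Set.Ici j))) :
    IsGallery D (flipGallery α (k:ℝ) L γ) ∧ (flipGallery α (k:ℝ) L γ).p 0 = γ.p 0 ∧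
      SameTypeGallery D γ (flipGallery α (k:ℝ) L γ) := by
  have hne : α ≠ 0 := D.nonzero α hα
  have bd_lo : ∀ i ∈ L, (i = 0 ∨ i - 1 ∉ L) → γ.p i ⊆ Hy α (k:ℝ) := by
    intro i hi hcase
    obtain ⟨P, hiP, hPL, hstr⟩ := hL i hi
    rcases hstr with ⟨j, m, hjm, hpj, hpm, rfl⟩ | ⟨j, hpj, rfl⟩
    · obtain ⟨hji, him⟩ := hiP
      rcases Nat.eq_or_lt_of_le hji with rfl | hlt
      · exact hpj
      · exfalso
        rcases hcase with rfl | h1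
        · omega
        · exact h1 (hPL (Set.mem_Ico.mpr ⟨by omega, by omega⟩))
    · have hji : j ≤ i := hiP
      rcases Nat.eq_or_lt_of_le hji with rfl | hlt
      · exact hpj
      · exfalso
        rcases hcase with rfl | h1
        · omega
        · exact h1 (hPL (Set.mem_Ici.mpr (by omega)))
  have bd_hi : ∀ i, 1 ≤ i → i - 1 ∈ L → i ∉ L → γ.p i ⊆ Hy α (k:ℝ) := by
    intro i h1 hmem hni
    obtain ⟨P, hiP, hPL, hstr⟩ := hL _ hmem
    rcases hstr with ⟨j, m, hjm, hpj, hpm, rfl⟩ | ⟨j, hpj, rfl⟩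
    · obtain ⟨hji, him⟩ := hiP
      have heq : i = m := by
        by_contra hne'
        exact hni (hPL (Set.mem_Ico.mpr ⟨by omega, by omega⟩))
      rw [heq]; exact hpm
    · have hji : j ≤ i - 1 := hiP
      exact absurd (hPL (Set.mem_Ici.mpr (by omega))) hni
  have hp' : ∀ i, (flipGallery α (k:ℝ) L γ).p i =
      if i ∈ L then sRefl α (k:ℝ) '' γ.p i else γ.p i := fun _ => rfl
  have hc' : ∀ i, (flipGallery α (k:ℝ) L γ).c i =
      if i ∈ L then sRefl α (k:ℝ) '' γ.c i else γ.c i := fun _ => rfl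
  have hlen : (flipGallery α (k:ℝ) L γ).len = γ.len := rfl
  obtain ⟨hA, ⟨hF0, hsub0⟩, ⟨hFl, hsubl⟩, hpan⟩ := hγ
  have p0eq : (flipGallery α (k:ℝ) L γ).p 0 = γ.p 0 := by
    rw [hp' 0]
    split_ifs with h0
    · exact sRefl_image_fix (bd_lo 0 h0 (Or.inl rfl))
    · rfl
  refine ⟨⟨?_, ?_, ?_, ?_⟩, p0eq, rfl, ?_⟩
  · -- alcoves
    intro i hi
    rw [hc' i]
    split_ifs with h
    · exact isAlcove_image D hα k (hA i hi)
    · exact hA i hi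
  · -- first face
    refine ⟨p0eq ▸ hF0, ?_⟩
    rw [p0eq, hc' 0]
    split_ifs with h
    · rw [← sRefl_image_fix (bd_lo 0 h (Or.inl rfl))]
      exact Set.image_mono hsub0
    · exact hsub0
  · -- last face
    rw [hlen, hp' (γ.len + 1), hc' γ.len]
    by_cases hl1 : γ.len + 1 ∈ L <;> by_cases hl : γ.len ∈ L
    · rw [if_pos hl1, if_pos hl]
      exact ⟨isFace_image D hα k hFl, Set.image_mono hsubl⟩
    · rw [if_pos hl1, if_neg hl, sRefl_image_fix (bd_lo (γ.len + 1) hl1 (Or.inr hl))]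
      exact ⟨hFl, hsubl⟩
    · rw [if_neg hl1, if_pos hl,
        ← sRefl_image_fix (bd_hi (γ.len + 1) (by omega) hl hl1)]
      exact ⟨isFace_image D hα k hFl, Set.image_mono hsubl⟩
    · rw [if_neg hl1, if_neg hl]
      exact ⟨hFl, hsubl⟩
  · -- panels
    intro i h1 hi
    rw [hlen] at hi
    rw [hp' i, hc' (i - 1), hc' i]
    obtain ⟨hpan1, hpan2⟩ := hpan i h1 hi
    by_cases hiL : i ∈ L <;> by_cases hiL' : i - 1 ∈ L
    · simp only [if_pos hiL, if_pos hiL']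
      exact ⟨panel_image D hα k hpan1, panel_image D hα k hpan2⟩
    · simp only [if_pos hiL, if_neg hiL']
      constructor
      · rw [sRefl_image_fix (bd_lo i hiL (Or.inr hiL'))]
        exact hpan1
      · exact panel_image D hα k hpan2
    · simp only [if_neg hiL, if_pos hiL']
      constructor
      · rw [← sRefl_image_fix (bd_hi i h1 hiL' hiL)]
        exact panel_image D hα k hpan1
      · exact hpan2
    · simp only [if_neg hiL, if_neg hiL']
      exact ⟨hpan1, hpan2⟩
  · -- same type
    intro i _
    rw [hp' i]
    split_ifs with h
    · exact sameTypeFace_sRefl D hα k (γ.p i)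
    · exact sameTypeFace_self D (γ.p i)

end FlipAux
/-- Remarks: for any `H`-outcrop `L` and `H`-ingrowth `L'`, the galleries
`e_H^L(γ)` and `f_H^{L'}(γ)` are combinatorial galleries with the same first face and the
same type as `γ`. -/
theorem flip_isGallery_sameType {n : ℕ} (D : RootData n)
    (α : V n) (hα : α ∈ D.Φ) (k : ℤ)
    (γ : PreGallery n) (hγ : IsGallery D γ)
    (L L' : Set ℕ) (hL : IsOutcrop D γ α (k : ℝ) L) (hL' : IsIngrowth D γ α (k : ℝ) L') :
    (IsGallery D (flipGallery α (k : ℝ) L γ) ∧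
      (flipGallery α (k : ℝ) L γ).p 0 = γ.p 0 ∧
      SameTypeGallery D γ (flipGallery α (k : ℝ) L γ)) ∧
    (IsGallery D (flipGallery α (k : ℝ) L' γ) ∧
      (flipGallery α (k : ℝ) L' γ).p 0 = γ.p 0 ∧
      SameTypeGallery D γ (flipGallery α (k : ℝ) L' γ)) := by
  have main : ∀ M : Set ℕ, (∀ i ∈ M, ∃ P : Set ℕ, i ∈ P ∧ P ⊆ M ∧
      ((∃ j m, j < m ∧ γ.p j ⊆ Hy α (k:ℝ) ∧ γ.p m ⊆ Hy α (k:ℝ) ∧ P = Set.Ico j m) ∨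
       (∃ j, γ.p j ⊆ Hy α (k:ℝ) ∧ P = Set.Ici j))) →
      IsGallery D (flipGallery α (k:ℝ) M γ) ∧ (flipGallery α (k:ℝ) M γ).p 0 = γ.p 0 ∧
        SameTypeGallery D γ (flipGallery α (k:ℝ) M γ) :=
    fun M hM => flip_main D hα k γ hγ M hM
  constructor
  · refine main L ?_
    obtain ⟨C, hC, hdisj, hLC⟩ := hL
    intro i hi
    rw [hLC] at hi
    obtain ⟨P, hPC, hiP⟩ := hi
    refine ⟨P, hiP, by rw [hLC]; exact Set.subset_sUnion_of_mem hPC, ?_⟩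
    rcases hC P hPC with ⟨j, m, hprot, rfl⟩ | ⟨j, hprot, rfl⟩
    · exact Or.inl ⟨j, m, hprot.1, hprot.2.2.1, hprot.2.2.2.1, rfl⟩
    · exact Or.inr ⟨j, hprot.2.1, rfl⟩
  · refine main L' ?_
    obtain ⟨C, hC, hdisj, hLC⟩ := hL'
    intro i hi
    rw [hLC] at hi
    obtain ⟨P, hPC, hiP⟩ := hi
    refine ⟨P, hiP, by rw [hLC]; exact Set.subset_sUnion_of_mem hPC, ?_⟩
    rcases hC P hPC with ⟨j, m, hind, rfl⟩ | ⟨j, hind, rfl⟩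
    · exact Or.inl ⟨j, m, hind.2.1, hind.2.2.2.1, hind.2.2.2.2.1, rfl⟩
    · exact Or.inr ⟨j, hind.2.2.1, rfl⟩
end
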